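/- arXiv:0804.3500 — 2 statements merged into one kernel-verified Lean document; each statement's English description precedes it below -/
import Mathlib

section
/- Optimal Matching Theorem: Let (a_i) and (b_i) be representative sequences for reduced size functions ℓ*₁ and ℓ*₂. Then the infimum over bijections σ : ℕ → ℕ of sup_i d(a_i, b_{σ(i)}) is attained: there exists a bijection σ̄ with max_i d(a_i, b_{σ̄(i)}) = d_match(ℓ*₁, ℓ*₂), and for every bijection σ with σ(0) = 0 the supremum sup_i d(a_i, b_{σ(i)}) is a maximum. -/
open Set Topology
open scoped ENNReal
open Filter

noncomputable def rsf {M : Type*} [TopologicalSpace M] (φ : M → ℝ) (x y : ℝ) : ℕ :=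
  Set.ncard {C : Set M | ∃ P, φ P ≤ x ∧ C = connectedComponentIn {Q | φ Q ≤ y} P}

section RsfLemmas

variable {M : Type*} [TopologicalSpace M] [CompactSpace M] [ConnectedSpace M]
  [LocallyConnectedSpace M] {φ : M → ℝ} (hφ : Continuous φ)

/-- The set of components counted by `rsf`. -/
def rsfSet {M : Type*} [TopologicalSpace M] (φ : M → ℝ) (x y : ℝ) : Set (Set M) :=
  {C : Set M | ∃ P, φ P ≤ x ∧ C = connectedComponentIn {Q | φ Q ≤ y} P}

lemma rsf_eq_ncard (φ : M → ℝ) (x y : ℝ) : rsf φ x y = (rsfSet φ x y).ncard := rfl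

include hφ in
lemma rsfSet_finite {x y : ℝ} (hxy : x < y) : (rsfSet φ x y).Finite := by
  by_contra hinf
  have hS : (rsfSet φ x y).Infinite := hinf
  let emb := hS.natEmbedding
  set P : ℕ → M := fun n => Classical.choose (emb n).2 with hPdef
  have hP : ∀ n, φ (P n) ≤ x ∧ (emb n : Set M)
      = connectedComponentIn {Q | φ Q ≤ y} (P n) :=
    fun n => Classical.choose_spec (emb n).2
  obtain ⟨z, hz⟩ := exists_clusterPt_of_compactSpace (Filter.map P Filter.atTop)
  have hzc : z ∈ closure (Set.range P) := by
    have h1 : ClusterPt z (𝓟 (Set.range P)) :=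
      hz.mono (le_principal_iff.mpr (Filter.mem_map.mpr
        (Filter.univ_mem' fun n => ⟨n, rfl⟩)))
    rwa [mem_closure_iff_clusterPt]
  have hzx : φ z ≤ x := by
    have hcl : IsClosed {Q | φ Q ≤ x} := isClosed_le hφ continuous_const
    have : Set.range P ⊆ {Q | φ Q ≤ x} := by rintro _ ⟨n, rfl⟩; exact (hP n).1
    exact (hcl.closure_subset_iff.mpr this) hzc
  have hopen : IsOpen {Q | φ Q < y} := isOpen_lt hφ continuous_const
  have hzV : z ∈ connectedComponentIn {Q | φ Q < y} z :=
    mem_connectedComponentIn (show φ z < y from lt_of_le_of_lt hzx hxy)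
  have hVopen : IsOpen (connectedComponentIn {Q | φ Q < y} z) := hopen.connectedComponentIn
  have hfreq : ∃ᶠ n in Filter.atTop, P n ∈ connectedComponentIn {Q | φ Q < y} z :=
    mapClusterPt_iff_frequently.mp hz _ (hVopen.mem_nhds hzV)
  obtain ⟨n₁, hn₁⟩ := hfreq.exists
  obtain ⟨n₂, hn₂, hn₂ge⟩ := (hfreq.and_eventually (Filter.eventually_ge_atTop (n₁ + 1))).exists
  have hsub : connectedComponentIn {Q | φ Q < y} z
      ⊆ connectedComponentIn {Q | φ Q ≤ y} (P n₁) :=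
    isPreconnected_connectedComponentIn.subset_connectedComponentIn hn₁
      ((connectedComponentIn_subset _ _).trans (fun Q hQ => show φ Q ≤ y from le_of_lt hQ))
  have heq : (emb n₁ : Set M) = (emb n₂ : Set M) := by
    rw [(hP n₁).2, (hP n₂).2, connectedComponentIn_eq (hsub hn₂)]
  have : n₁ = n₂ := by
    have := emb.injective (Subtype.ext heq)
    exact this
  omega

end RsfLemmas

section Rsf2

set_option linter.unusedSectionVars false

variable {M : Type*} [TopologicalSpace M] [CompactSpace M] [ConnectedSpace M]
  [LocallyConnectedSpace M] {φ : M → ℝ} (hφ : Continuous φ)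

lemma rsfSet_mono_x {x1 x2 y : ℝ} (h : x1 ≤ x2) : rsfSet φ x1 y ⊆ rsfSet φ x2 y := by
  rintro C ⟨P, hP, rfl⟩
  exact ⟨P, hP.trans h, rfl⟩

include hφ in
lemma rsf_mono_x {x1 x2 y : ℝ} (h : x1 ≤ x2) (h2 : x2 < y) : rsf φ x1 y ≤ rsf φ x2 y :=
  Set.ncard_le_ncard (rsfSet_mono_x h) (rsfSet_finite hφ h2)

/-- The map sending a component at level `y1` to the component at level `y2` containing it. -/
def compMap {M : Type*} [TopologicalSpace M] (φ : M → ℝ) (y2 : ℝ) (C : Set M) : Set M :=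
  ⋃ P ∈ C, connectedComponentIn {Q | φ Q ≤ y2} P

lemma compMap_eq {x y1 y2 : ℝ} (hxy : x ≤ y1) (hy : y1 ≤ y2) {P₀ : M} (hP₀ : φ P₀ ≤ x) :
    compMap φ y2 (connectedComponentIn {Q | φ Q ≤ y1} P₀)
      = connectedComponentIn {Q | φ Q ≤ y2} P₀ := by
  set C := connectedComponentIn {Q | φ Q ≤ y1} P₀ with hC
  have hP₀C : P₀ ∈ C := mem_connectedComponentIn (show φ P₀ ≤ y1 from hP₀.trans hxy)
  have hCsub : C ⊆ {Q | φ Q ≤ y2} :=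
    (connectedComponentIn_subset _ _).trans (fun Q hQ => le_trans hQ hy)
  have hkey : ∀ P ∈ C, connectedComponentIn {Q | φ Q ≤ y2} P
      = connectedComponentIn {Q | φ Q ≤ y2} P₀ := by
    intro P hP
    have hsub : C ⊆ connectedComponentIn {Q | φ Q ≤ y2} P₀ :=
      isPreconnected_connectedComponentIn.subset_connectedComponentIn hP₀C hCsub
    exact (connectedComponentIn_eq (hsub hP)).symm
  apply Set.eq_of_subset_of_subset
  · intro Q hQ
    simp only [compMap, Set.mem_iUnion] at hQ
    obtain ⟨P, hP, hQ⟩ := hQ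
    rwa [hkey P hP] at hQ
  · intro Q hQ
    simp only [compMap, Set.mem_iUnion]
    exact ⟨P₀, hP₀C, by rwa [hkey P₀ hP₀C]⟩

lemma compMap_image {x y1 y2 : ℝ} (hxy : x ≤ y1) (hy : y1 ≤ y2) :
    compMap φ y2 '' rsfSet φ x y1 = rsfSet φ x y2 := by
  apply Set.eq_of_subset_of_subset
  · rintro _ ⟨C, ⟨P, hP, rfl⟩, rfl⟩
    exact ⟨P, hP, (compMap_eq hxy hy hP)⟩
  · rintro _ ⟨P, hP, rfl⟩
    exact ⟨connectedComponentIn {Q | φ Q ≤ y1} P, ⟨P, hP, rfl⟩, compMap_eq hxy hy hP⟩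

include hφ in
lemma rsf_anti_y {x y1 y2 : ℝ} (hx : x < y1) (hy : y1 ≤ y2) : rsf φ x y2 ≤ rsf φ x y1 := by
  rw [rsf_eq_ncard, rsf_eq_ncard, ← compMap_image hx.le hy]
  exact Set.ncard_image_le (rsfSet_finite hφ hx)

include hφ in
lemma rsf_cell {x1 x2 y1 y2 : ℝ} (hx : x1 ≤ x2) (hy : y1 ≤ y2) (hxy : x2 < y1) :
    rsf φ x1 y1 + rsf φ x2 y2 ≤ rsf φ x2 y1 + rsf φ x1 y2 := by
  have hx1y1 : x1 < y1 := lt_of_le_of_lt hx hxy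
  have hfin21 : (rsfSet φ x2 y1).Finite := rsfSet_finite hφ hxy
  have hfin11 : (rsfSet φ x1 y1).Finite := hfin21.subset (rsfSet_mono_x hx)
  have hfin12 : (rsfSet φ x1 y2).Finite := rsfSet_finite hφ (hx1y1.trans_le hy)
  have him21 : compMap φ y2 '' rsfSet φ x2 y1 = rsfSet φ x2 y2 := compMap_image hxy.le hy
  have him11 : compMap φ y2 '' rsfSet φ x1 y1 = rsfSet φ x1 y2 := compMap_image hx1y1.le hy
  have hsplit : rsfSet φ x2 y1 = rsfSet φ x1 y1 ∪ (rsfSet φ x2 y1 \ rsfSet φ x1 y1) :=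
    (Set.union_diff_cancel (rsfSet_mono_x hx)).symm
  have hsub : rsfSet φ x2 y2
      ⊆ rsfSet φ x1 y2 ∪ compMap φ y2 '' (rsfSet φ x2 y1 \ rsfSet φ x1 y1) := by
    have : rsfSet φ x2 y2 = compMap φ y2 '' rsfSet φ x1 y1
        ∪ compMap φ y2 '' (rsfSet φ x2 y1 \ rsfSet φ x1 y1) := by
      rw [← Set.image_union, ← hsplit, him21]
    rw [this, him11]
  have h1 : (rsfSet φ x2 y2).ncard
      ≤ (rsfSet φ x1 y2).ncard + (rsfSet φ x2 y1 \ rsfSet φ x1 y1).ncard := by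
    calc (rsfSet φ x2 y2).ncard
        ≤ (rsfSet φ x1 y2 ∪ compMap φ y2 '' (rsfSet φ x2 y1 \ rsfSet φ x1 y1)).ncard := by
          exact Set.ncard_le_ncard hsub (hfin12.union (hfin21.diff.image _))
      _ ≤ (rsfSet φ x1 y2).ncard + (compMap φ y2 '' (rsfSet φ x2 y1 \ rsfSet φ x1 y1)).ncard :=
          Set.ncard_union_le _ _
      _ ≤ (rsfSet φ x1 y2).ncard + (rsfSet φ x2 y1 \ rsfSet φ x1 y1).ncard :=
          Nat.add_le_add_left (Set.ncard_image_le hfin21.diff) _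
  have h2 : (rsfSet φ x2 y1 \ rsfSet φ x1 y1).ncard + (rsfSet φ x1 y1).ncard
      = (rsfSet φ x2 y1).ncard :=
    Set.ncard_diff_add_ncard_of_subset (rsfSet_mono_x hx) hfin21
  simp only [rsf_eq_ncard]
  omega

end Rsf2
section Stage2

set_option linter.unusedSectionVars false

noncomputable def mult {M : Type*} [TopologicalSpace M] (φ : M → ℝ) (p : ℝ × ℝ) : ℤ :=
  sInf {z : ℤ | ∃ ε : ℝ, 0 < ε ∧ p.1 + ε < p.2 - ε ∧
    z = (rsf φ (p.1 + ε) (p.2 - ε) : ℤ) - (rsf φ (p.1 - ε) (p.2 - ε) : ℤ)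
      - (rsf φ (p.1 + ε) (p.2 + ε) : ℤ) + (rsf φ (p.1 - ε) (p.2 + ε) : ℤ)}

noncomputable def multInf {M : Type*} [TopologicalSpace M] (φ : M → ℝ) (k : ℝ) : ℤ :=
  sInf {z : ℤ | ∃ ε : ℝ, 0 < ε ∧ k + ε < 1 / ε ∧
    z = (rsf φ (k + ε) (1 / ε) : ℤ) - (rsf φ (k - ε) (1 / ε) : ℤ)}

noncomputable def rsfN {M : Type*} [TopologicalSpace M] (φ : M → ℝ) (α β γ δ : ℝ) : ℤ :=
  (rsf φ β γ : ℤ) - (rsf φ α γ : ℤ) - (rsf φ β δ : ℤ) + (rsf φ α δ : ℤ)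

variable {M : Type*} [TopologicalSpace M] [CompactSpace M] [ConnectedSpace M]
  [LocallyConnectedSpace M] {φ : M → ℝ} (hφ : Continuous φ)

include hφ in
lemma rsfN_nonneg {α β γ δ : ℝ} (hα : α ≤ β) (hγ : γ ≤ δ) (hβγ : β < γ) :
    0 ≤ rsfN φ α β γ δ := by
  have h := rsf_cell hφ hα hγ hβγ
  simp only [rsfN]; omega

lemma rsfN_add_x (φ : M → ℝ) (α μ β γ δ : ℝ) :
    rsfN φ α β γ δ = rsfN φ α μ γ δ + rsfN φ μ β γ δ := by simp only [rsfN]; ring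

lemma rsfN_add_y (φ : M → ℝ) (α β γ ν δ : ℝ) :
    rsfN φ α β γ δ = rsfN φ α β γ ν + rsfN φ α β ν δ := by simp only [rsfN]; ring

lemma multSet_eq (φ : M → ℝ) (p : ℝ × ℝ) :
    {z : ℤ | ∃ ε : ℝ, 0 < ε ∧ p.1 + ε < p.2 - ε ∧
      z = (rsf φ (p.1 + ε) (p.2 - ε) : ℤ) - (rsf φ (p.1 - ε) (p.2 - ε) : ℤ)
        - (rsf φ (p.1 + ε) (p.2 + ε) : ℤ) + (rsf φ (p.1 - ε) (p.2 + ε) : ℤ)}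
    = {z : ℤ | ∃ ε : ℝ, 0 < ε ∧ p.1 + ε < p.2 - ε ∧
        z = rsfN φ (p.1 - ε) (p.1 + ε) (p.2 - ε) (p.2 + ε)} := by
  simp only [rsfN]

include hφ in
lemma multSet_bddBelow (p : ℝ × ℝ) :
    BddBelow {z : ℤ | ∃ ε : ℝ, 0 < ε ∧ p.1 + ε < p.2 - ε ∧
        z = rsfN φ (p.1 - ε) (p.1 + ε) (p.2 - ε) (p.2 + ε)} := by
  refine ⟨0, ?_⟩
  rintro z ⟨ε, hε, hlt, rfl⟩
  exact rsfN_nonneg hφ (by linarith) (by linarith) hlt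

include hφ in
lemma mult_le_elem {p : ℝ × ℝ} {ε : ℝ} (hε : 0 < ε) (hlt : p.1 + ε < p.2 - ε) :
    mult φ p ≤ rsfN φ (p.1 - ε) (p.1 + ε) (p.2 - ε) (p.2 + ε) := by
  rw [mult, multSet_eq]
  exact csInf_le (multSet_bddBelow hφ p) ⟨ε, hε, hlt, rfl⟩

lemma mult_pos_lt {p : ℝ × ℝ} (hm : 0 < mult φ p) : p.1 < p.2 := by
  by_contra h
  push_neg at h
  have : {z : ℤ | ∃ ε : ℝ, 0 < ε ∧ p.1 + ε < p.2 - ε ∧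
      z = (rsf φ (p.1 + ε) (p.2 - ε) : ℤ) - (rsf φ (p.1 - ε) (p.2 - ε) : ℤ)
        - (rsf φ (p.1 + ε) (p.2 + ε) : ℤ) + (rsf φ (p.1 - ε) (p.2 + ε) : ℤ)} = ∅ := by
    ext z; simp only [Set.mem_setOf_eq, Set.mem_empty_iff_false, iff_false]
    rintro ⟨ε, hε, hlt, -⟩; linarith
  rw [mult, this, Int.csInf_empty] at hm
  exact lt_irrefl 0 hm

lemma rsf_eq_zero_of_lt {x y : ℝ} (h : ∀ Q, ¬ φ Q ≤ x) : rsf φ x y = 0 := by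
  rw [rsf_eq_ncard]
  convert Set.ncard_empty (Set M)
  ext C; simp only [rsfSet, Set.mem_setOf_eq, Set.mem_empty_iff_false, iff_false]
  rintro ⟨P, hP, -⟩; exact h P hP

include hφ in
lemma mult_pos_min_le {p : ℝ × ℝ} (hm : 0 < mult φ p) {Pm : M} (hPm : ∀ Q, φ Pm ≤ φ Q) :
    φ Pm ≤ p.1 := by
  by_contra h
  push_neg at h
  have hxy : p.1 < p.2 := mult_pos_lt hm
  set ε := min ((φ Pm - p.1)/2) ((p.2 - p.1)/3) with hεdef
  have hε : 0 < ε := lt_min (by linarith) (by linarith)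
  have hε1 : ε ≤ (φ Pm - p.1)/2 := min_le_left _ _
  have hε2 : ε ≤ (p.2 - p.1)/3 := min_le_right _ _
  have hlt : p.1 + ε < p.2 - ε := by linarith
  have hz : rsfN φ (p.1 - ε) (p.1 + ε) (p.2 - ε) (p.2 + ε) = 0 := by
    have h0 : ∀ t : ℝ, t < φ Pm → rsf φ t (p.2 - ε) = 0 ∧ rsf φ t (p.2 + ε) = 0 := by
      intro t ht
      constructor <;> exact rsf_eq_zero_of_lt (fun Q hQ => absurd ((hPm Q).trans hQ) (not_le.mpr ht))
    have h1 := h0 (p.1 + ε) (by linarith)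
    have h2 := h0 (p.1 - ε) (by linarith)
    simp only [rsfN, h1.1, h1.2, h2.1, h2.2]; ring
  have := mult_le_elem hφ hε hlt
  rw [hz] at this
  omega

include hφ in
lemma mult_pos_le_max {p : ℝ × ℝ} (hm : 0 < mult φ p) {PM : M} (hPM : ∀ Q, φ Q ≤ φ PM) :
    p.2 ≤ φ PM := by
  by_contra h
  push_neg at h
  have hxy : p.1 < p.2 := mult_pos_lt hm
  set ε := min ((p.2 - φ PM)/2) ((p.2 - p.1)/3) with hεdef
  have hε : 0 < ε := lt_min (by linarith) (by linarith)
  have hε1 : ε ≤ (p.2 - φ PM)/2 := min_le_left _ _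
  have hε2 : ε ≤ (p.2 - p.1)/3 := min_le_right _ _
  have hlt : p.1 + ε < p.2 - ε := by linarith
  have hset : {Q : M | φ Q ≤ p.2 - ε} = {Q : M | φ Q ≤ p.2 + ε} := by
    ext Q; simp only [Set.mem_setOf_eq]
    constructor
    · intro h'; linarith
    · intro h'; have := hPM Q; linarith
  have hz : rsfN φ (p.1 - ε) (p.1 + ε) (p.2 - ε) (p.2 + ε) = 0 := by
    have key : ∀ t : ℝ, rsf φ t (p.2 - ε) = rsf φ t (p.2 + ε) := by
      intro t
      unfold rsf
      rw [hset]
    simp only [rsfN, key]; ring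
  have := mult_le_elem hφ hε hlt
  rw [hz] at this
  omega

include hφ in
lemma card_le_rsfN (n : ℕ) :
    ∀ (T : Finset (ℝ × ℝ)) (α β γ δ : ℝ), T.card ≤ n → α ≤ β → γ ≤ δ → β < γ →
      (∀ p ∈ T, α < p.1 ∧ p.1 < β ∧ γ < p.2 ∧ p.2 < δ ∧ 0 < mult φ p) →
      (T.card : ℤ) ≤ rsfN φ α β γ δ := by
  induction n with
  | zero =>
    intro T α β γ δ hcard hα hγ hβγ hT
    interval_cases h : T.card
    · simpa using rsfN_nonneg hφ hα hγ hβγ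
  | succ n ih =>
    intro T α β γ δ hcard hα hγ hβγ hT
    rcases Nat.lt_or_ge T.card (n + 1) with hlt | hge
    · exact ih T α β γ δ (by omega) hα hγ hβγ hT
    have hcard' : T.card = n + 1 := le_antisymm hcard hge
    rcases Nat.lt_or_ge T.card 2 with h2 | h2
    · -- T is a singleton
      have h1 : T.card = 1 := by omega
      obtain ⟨p, rfl⟩ := Finset.card_eq_one.mp h1
      obtain ⟨hpα, hpβ, hpγ, hpδ, hpm⟩ := hT p (Finset.mem_singleton_self p)
      obtain ⟨x, y⟩ := p
      simp only at hpα hpβ hpγ hpδ hpm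
      set ε := min (min (x - α) (β - x)) (min (min (y - γ) (δ - y)) ((y - x)/3)) with hεdef
      have hxy : x < y := lt_trans (lt_trans hpβ hβγ) hpγ
      have hε : 0 < ε := by
        apply lt_min (lt_min (by linarith) (by linarith))
        apply lt_min (lt_min (by linarith) (by linarith)) (by linarith)
      have he1 : ε ≤ x - α := (min_le_left _ _).trans (min_le_left _ _)
      have he2 : ε ≤ β - x := (min_le_left _ _).trans (min_le_right _ _)
      have he3 : ε ≤ y - γ := (min_le_right _ _).trans ((min_le_left _ _).trans (min_le_left _ _))
      have he4 : ε ≤ δ - y := (min_le_right _ _).trans ((min_le_left _ _).trans (min_le_right _ _))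
      have he5 : ε ≤ (y - x)/3 := (min_le_right _ _).trans (min_le_right _ _)
      have hclean : x + ε < y - ε := by linarith
      have hmid : 1 ≤ rsfN φ (x - ε) (x + ε) (y - ε) (y + ε) := by
        have h' := mult_le_elem hφ (p := (x, y)) hε hclean
        simp only at h'
        omega
      have hdec : rsfN φ α β γ δ =
          (rsfN φ α (x - ε) γ δ + rsfN φ (x + ε) β γ δ)
          + (rsfN φ (x - ε) (x + ε) γ (y - ε) + rsfN φ (x - ε) (x + ε) (y + ε) δ)
          + rsfN φ (x - ε) (x + ε) (y - ε) (y + ε) := by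
        simp only [rsfN]; ring
      have n1 : 0 ≤ rsfN φ α (x - ε) γ δ :=
        rsfN_nonneg hφ (by linarith) hγ (by linarith)
      have n2 : 0 ≤ rsfN φ (x + ε) β γ δ := rsfN_nonneg hφ (by linarith) hγ hβγ
      have n3 : 0 ≤ rsfN φ (x - ε) (x + ε) γ (y - ε) :=
        rsfN_nonneg hφ (by linarith) (by linarith) (by linarith)
      have n4 : 0 ≤ rsfN φ (x - ε) (x + ε) (y + ε) δ :=
        rsfN_nonneg hφ (by linarith) (by linarith) (by linarith)
      rw [Finset.card_singleton]
      omega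
    · -- at least two points; split
      obtain ⟨p, hp, q, hq, hpq⟩ := Finset.one_lt_card.mp h2
      have hsplit : p.1 ≠ q.1 ∨ p.2 ≠ q.2 := by
        by_contra h
        push_neg at h
        exact hpq (Prod.ext h.1 h.2)
      rcases hsplit with hne | hne
      · -- split in x
        obtain ⟨p', hp', q', hq', huv⟩ : ∃ p' ∈ T, ∃ q' ∈ T, p'.1 < q'.1 := by
          rcases lt_or_gt_of_ne hne with h | h
          exacts [⟨p, hp, q, hq, h⟩, ⟨q, hq, p, hp, h⟩]
        obtain ⟨μ, hμIoo, hμT⟩ :=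
          (Set.Ioo_infinite huv).exists_notMem_finset (T.image Prod.fst)
        have hμ1 : p'.1 < μ := hμIoo.1
        have hμ2 : μ < q'.1 := hμIoo.2
        have hμne : ∀ r ∈ T, r.1 ≠ μ := by
          intro r hr h
          exact hμT (Finset.mem_image.mpr ⟨r, hr, h⟩)
        set T₁ := T.filter (fun r => r.1 < μ) with hT₁
        set T₂ := T.filter (fun r => ¬ r.1 < μ) with hT₂
        have hcards : T₁.card + T₂.card = T.card := Finset.card_filter_add_card_filter_not _
        have hαμ : α ≤ μ := by
          have := (hT p' hp').1; linarith
        have hμγ : μ < γ := by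
          have := (hT q' hq').2.1; linarith
        have hμβ : μ ≤ β := by
          have := (hT q' hq').2.1; linarith
        have hT₁ne : T₁.Nonempty :=
          ⟨p', Finset.mem_filter.mpr ⟨hp', hμ1⟩⟩
        have hT₂ne : T₂.Nonempty :=
          ⟨q', Finset.mem_filter.mpr ⟨hq', not_lt.mpr hμ2.le⟩⟩
        have hc1 : T₁.card ≤ n := by
          have := Finset.card_pos.mpr hT₂ne; omega
        have hc2 : T₂.card ≤ n := by
          have := Finset.card_pos.mpr hT₁ne; omega
        have ih1 := ih T₁ α μ γ δ hc1 hαμ hγ hμγ (by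
          intro r hr
          obtain ⟨hrT, hrμ⟩ := Finset.mem_filter.mp hr
          obtain ⟨h1, h2, h3, h4, h5⟩ := hT r hrT
          exact ⟨h1, hrμ, h3, h4, h5⟩)
        have ih2 := ih T₂ μ β γ δ hc2 hμβ hγ hβγ (by
          intro r hr
          obtain ⟨hrT, hrμ⟩ := Finset.mem_filter.mp hr
          obtain ⟨h1, h2, h3, h4, h5⟩ := hT r hrT
          exact ⟨lt_of_le_of_ne (not_lt.mp hrμ) (Ne.symm (hμne r hrT)), h2, h3, h4, h5⟩)
        rw [rsfN_add_x φ α μ β γ δ]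
        omega
      · -- split in y
        obtain ⟨p', hp', q', hq', huv⟩ : ∃ p' ∈ T, ∃ q' ∈ T, p'.2 < q'.2 := by
          rcases lt_or_gt_of_ne hne with h | h
          exacts [⟨p, hp, q, hq, h⟩, ⟨q, hq, p, hp, h⟩]
        obtain ⟨ν, hνIoo, hνT⟩ :=
          (Set.Ioo_infinite huv).exists_notMem_finset (T.image Prod.snd)
        have hν1 : p'.2 < ν := hνIoo.1
        have hν2 : ν < q'.2 := hνIoo.2
        have hνne : ∀ r ∈ T, r.2 ≠ ν := by
          intro r hr h
          exact hνT (Finset.mem_image.mpr ⟨r, hr, h⟩)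
        set T₁ := T.filter (fun r => r.2 < ν) with hT₁
        set T₂ := T.filter (fun r => ¬ r.2 < ν) with hT₂
        have hcards : T₁.card + T₂.card = T.card := Finset.card_filter_add_card_filter_not _
        have hγν : γ ≤ ν := by
          have := (hT p' hp').2.2.1; linarith
        have hνδ : ν ≤ δ := by
          have := (hT q' hq').2.2.2.1; linarith
        have hβν : β < ν := lt_of_lt_of_le hβγ hγν
        have hT₁ne : T₁.Nonempty :=
          ⟨p', Finset.mem_filter.mpr ⟨hp', hν1⟩⟩
        have hT₂ne : T₂.Nonempty :=
          ⟨q', Finset.mem_filter.mpr ⟨hq', not_lt.mpr hν2.le⟩⟩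
        have hc1 : T₁.card ≤ n := by
          have := Finset.card_pos.mpr hT₂ne; omega
        have hc2 : T₂.card ≤ n := by
          have := Finset.card_pos.mpr hT₁ne; omega
        have ih1 := ih T₁ α β γ ν hc1 hα hγν hβγ (by
          intro r hr
          obtain ⟨hrT, hrν⟩ := Finset.mem_filter.mp hr
          obtain ⟨h1, h2, h3, h4, h5⟩ := hT r hrT
          exact ⟨h1, h2, h3, hrν, h5⟩)
        have ih2 := ih T₂ α β ν δ hc2 hα hνδ hβν (by
          intro r hr
          obtain ⟨hrT, hrν⟩ := Finset.mem_filter.mp hr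
          obtain ⟨h1, h2, h3, h4, h5⟩ := hT r hrT
          exact ⟨h1, h2, lt_of_le_of_ne (not_lt.mp hrν) (Ne.symm (hνne r hrT)), h4, h5⟩)
        rw [rsfN_add_y φ α β γ ν δ]
        omega

end Stage2
section Stage3

set_option linter.unusedSectionVars false

variable {M : Type*} [TopologicalSpace M] [CompactSpace M] [ConnectedSpace M]
  [LocallyConnectedSpace M] {φ : M → ℝ} (hφ : Continuous φ)

include hφ in
lemma exists_min : ∃ Pm : M, ∀ Q, φ Pm ≤ φ Q := by
  obtain ⟨Pm, -, h⟩ := isCompact_univ.exists_isMinOn (Set.univ_nonempty) hφ.continuousOn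
  exact ⟨Pm, fun Q => h (Set.mem_univ Q)⟩

include hφ in
lemma exists_max : ∃ PM : M, ∀ Q, φ Q ≤ φ PM := by
  obtain ⟨PM, -, h⟩ := isCompact_univ.exists_isMaxOn (Set.univ_nonempty) hφ.continuousOn
  exact ⟨PM, fun Q => h (Set.mem_univ Q)⟩

include hφ in
lemma mult_finite {c : ℝ} (hc : 0 < c) :
    {p : ℝ × ℝ | 0 < mult φ p ∧ 2*c ≤ p.2 - p.1}.Finite := by
  obtain ⟨Pm, hPm⟩ := exists_min hφ
  obtain ⟨PM, hPM⟩ := exists_max hφ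
  set m := φ Pm with hm
  set Mx := φ PM with hMx
  set S := {p : ℝ × ℝ | 0 < mult φ p ∧ 2*c ≤ p.2 - p.1} with hS
  have hSsub : S ⊆ Set.Icc m Mx ×ˢ Set.Icc m Mx := by
    rintro p ⟨hp1, hp2⟩
    have h1 : m ≤ p.1 := mult_pos_min_le hφ hp1 hPm
    have h2 : p.2 ≤ Mx := mult_pos_le_max hφ hp1 hPM
    have h3 : p.1 < p.2 := mult_pos_lt hp1
    exact ⟨⟨h1, le_trans h3.le h2⟩, ⟨le_trans h1 h3.le, h2⟩⟩
  set U : ℝ × ℝ → Set (ℝ × ℝ) :=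
    fun z => Set.Ioo (z.1 - c/4) (z.1 + c/4) ×ˢ Set.Ioo (z.2 - c/4) (z.2 + c/4) with hU
  have hUopen : ∀ z, IsOpen (U z) := fun z => isOpen_Ioo.prod isOpen_Ioo
  have hcover : Set.Icc m Mx ×ˢ Set.Icc m Mx ⊆ ⋃ z, U z := by
    intro z _
    exact Set.mem_iUnion.mpr ⟨z, ⟨⟨by linarith, by linarith⟩, ⟨by linarith, by linarith⟩⟩⟩
  obtain ⟨t, ht⟩ := (isCompact_Icc.prod isCompact_Icc).elim_finite_subcover U hUopen hcover
  have hfin : ∀ z : ℝ × ℝ, (S ∩ U z).Finite := by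
    intro z
    by_cases hz : 3*c/2 < z.2 - z.1
    · set α := z.1 - c/4 with hα
      set β := z.1 + c/4 with hβ
      set γ := z.2 - c/4 with hγ
      set δ := z.2 + c/4 with hδ
      have hβγ : β < γ := by rw [hβ, hγ]; linarith
      by_contra hinf
      have hinf' : (S ∩ U z).Infinite := hinf
      obtain ⟨T, hTsub, hTfin, hTcard⟩ :=
        hinf'.exists_subset_ncard_eq (rsf φ β γ + 1)
      set TF := hTfin.toFinset with hTF
      have hTFcard : TF.card = rsf φ β γ + 1 := by
        rw [← hTcard, Set.ncard_eq_toFinset_card _ hTfin]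
      have hcond : ∀ p ∈ TF, α < p.1 ∧ p.1 < β ∧ γ < p.2 ∧ p.2 < δ ∧ 0 < mult φ p := by
        intro p hp
        have hpS : p ∈ S ∩ U z := hTsub (hTfin.mem_toFinset.mp hp)
        obtain ⟨⟨hmult, -⟩, ⟨hx1, hx2⟩, ⟨hy1, hy2⟩⟩ := hpS
        exact ⟨hx1, hx2, hy1, hy2, hmult⟩
      have hle := card_le_rsfN hφ TF.card TF α β γ δ le_rfl (by rw [hα, hβ]; linarith)
        (by rw [hγ, hδ]; linarith) hβγ hcond
      have hNle : rsfN φ α β γ δ ≤ (rsf φ β γ : ℤ) := by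
        have h1 : rsf φ α δ ≤ rsf φ α γ :=
          rsf_anti_y hφ (by rw [hα, hγ]; linarith) (by rw [hγ, hδ]; linarith)
        simp only [rsfN]
        omega
      omega
    · have : S ∩ U z = ∅ := by
        rw [Set.eq_empty_iff_forall_notMem]
        rintro p ⟨⟨-, hpers⟩, ⟨hx1, hx2⟩, ⟨hy1, hy2⟩⟩
        apply hz
        linarith
      rw [this]
      exact Set.finite_empty
  apply Set.Finite.subset (Set.Finite.biUnion t.finite_toSet (fun z _ => hfin z))
  intro p hp
  have := ht (hSsub hp)
  rw [Set.mem_iUnion₂] at this ⊢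
  obtain ⟨z, hzt, hzU⟩ := this
  exact ⟨z, hzt, hp, hzU⟩

include hφ in
lemma rsf_of_top {x y : ℝ} (hy : ∀ Q : M, φ Q ≤ y) {Pm : M} (hPm : ∀ Q, φ Pm ≤ φ Q) :
    rsf φ x y = if φ Pm ≤ x then 1 else 0 := by
  have huniv : {Q : M | φ Q ≤ y} = Set.univ := Set.eq_univ_iff_forall.mpr hy
  have hcc : ∀ P : M, connectedComponentIn {Q : M | φ Q ≤ y} P = Set.univ := by
    intro P
    rw [huniv, connectedComponentIn_univ, PreconnectedSpace.connectedComponent_eq_univ]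
  rw [rsf_eq_ncard]
  split_ifs with h
  · have : rsfSet φ x y = {Set.univ} := by
      apply Set.eq_of_subset_of_subset
      · rintro _ ⟨P, hP, rfl⟩; simp [hcc]
      · rintro C hC
        rw [Set.mem_singleton_iff] at hC
        exact ⟨Pm, h, by rw [hC, hcc]⟩
    rw [this, Set.ncard_singleton]
  · have : rsfSet φ x y = ∅ := by
      rw [Set.eq_empty_iff_forall_notMem]
      rintro C ⟨P, hP, rfl⟩
      exact h ((hPm P).trans hP)
    rw [this, Set.ncard_empty]

include hφ in
lemma multInf_pos_eq_min {k : ℝ} (h : 0 < multInf φ k) {Pm : M} (hPm : ∀ Q, φ Pm ≤ φ Q) :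
    k = φ Pm := by
  obtain ⟨PM, hPM⟩ := exists_max hφ
  set m := φ Pm with hm
  set Mx := φ PM with hMx
  set Sz := {z : ℤ | ∃ ε : ℝ, 0 < ε ∧ k + ε < 1 / ε ∧
    z = (rsf φ (k + ε) (1 / ε) : ℤ) - (rsf φ (k - ε) (1 / ε) : ℤ)} with hSz
  have hbdd : BddBelow Sz := by
    refine ⟨0, ?_⟩
    rintro z ⟨ε, hε, hlt, rfl⟩
    have := rsf_mono_x hφ (show k - ε ≤ k + ε by linarith) hlt
    omega
  have hmem : ∀ z ∈ Sz, 1 ≤ z := by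
    intro z hz
    have : multInf φ k ≤ z := csInf_le hbdd hz
    omega
  have key : ∀ ε' : ℝ, 0 < ε' → |k - m| ≤ ε' := by
    intro ε' hε'
    set B := |k| + |Mx| + 2 with hB
    have hBpos : 0 < B := by positivity
    set ε := min ε' (min 1 (1/B)) with hε
    have hεpos : 0 < ε := lt_min hε' (lt_min one_pos (by positivity))
    have hεε' : ε ≤ ε' := min_le_left _ _
    have hε1 : ε ≤ 1 := (min_le_right _ _).trans (min_le_left _ _)
    have hεB : ε ≤ 1/B := (min_le_right _ _).trans (min_le_right _ _)
    have hinv : B ≤ 1/ε := by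
      rw [le_div_iff₀ hεpos]
      calc B * ε ≤ B * (1/B) := by nlinarith
        _ = 1 := by field_simp
    have habs1 : k ≤ |k| := le_abs_self k
    have habs2 : Mx ≤ |Mx| := le_abs_self Mx
    have hklt : k + ε < 1/ε := by
      calc k + ε ≤ |k| + 1 := by linarith
        _ < B := by rw [hB]; have := abs_nonneg Mx; linarith
        _ ≤ 1/ε := hinv
    have hMxlt : ∀ Q, φ Q ≤ 1/ε := by
      intro Q
      have h1 : φ Q ≤ Mx := hPM Q
      have h2 : |Mx| < B := by rw [hB]; have := abs_nonneg k; linarith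
      linarith [hinv]
    have hz : ((if m ≤ k + ε then 1 else 0 : ℕ) : ℤ) - ((if m ≤ k - ε then 1 else 0 : ℕ) : ℤ) ∈ Sz := by
      refine ⟨ε, hεpos, hklt, ?_⟩
      rw [rsf_of_top hφ hMxlt hPm, rsf_of_top hφ hMxlt hPm]
    have h1 := hmem _ hz
    rcases le_or_gt m (k + ε) with ha | ha <;> rcases le_or_gt m (k - ε) with hb | hb
    · rw [if_pos ha, if_pos hb] at h1; simp at h1
    · rw [abs_le]; constructor <;> linarith
    · exfalso; linarith
    · rw [if_neg (not_le.mpr ha), if_neg (not_le.mpr hb)] at h1; simp at h1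
  by_contra hne
  have habs : 0 < |k - m| := abs_pos.mpr (sub_ne_zero.mpr hne)
  have := key (|k - m|/2) (by linarith)
  linarith

end Stage3
section Stage4

set_option linter.unusedSectionVars false

open scoped Classical in
noncomputable def eDist (p q : ℝ × EReal) : ℝ≥0∞ :=
  if p.2 = ⊤ ∧ q.2 = ⊤ then ENNReal.ofReal |p.1 - q.1|
  else if p.2 = ⊤ ∨ q.2 = ⊤ then ⊤
  else ENNReal.ofReal (min (max |p.1 - q.1| |p.2.toReal - q.2.toReal|)
    (max ((p.2.toReal - p.1) / 2) ((q.2.toReal - q.1) / 2)))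

/-- A point on the diagonal. -/
def isDiag (p : ℝ × EReal) : Prop := p.2 = (p.1 : EReal)

/-- A point which is not at `⊥`. -/
def Good (p : ℝ × EReal) : Prop := p.2 = ⊤ ∨ ∃ y : ℝ, p.2 = (y : EReal)

lemma isDiag_good {p : ℝ × EReal} (h : isDiag p) : Good p := Or.inr ⟨p.1, h⟩

lemma eDist_top_top (k k' : ℝ) : eDist (k, ⊤) (k', ⊤) = ENNReal.ofReal |k - k'| := by
  simp [eDist]

lemma eDist_top_ne {q : ℝ × EReal} (k : ℝ) (h : q.2 ≠ ⊤) : eDist (k, ⊤) q = ⊤ := by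
  simp [eDist, h]

lemma eDist_ne_top {p : ℝ × EReal} (k : ℝ) (h : p.2 ≠ ⊤) : eDist p (k, ⊤) = ⊤ := by
  simp [eDist, h]

lemma eDist_coe_coe (x y x' y' : ℝ) :
    eDist (x, (y : EReal)) (x', (y' : EReal))
      = ENNReal.ofReal (min (max |x - x'| |y - y'|) (max ((y - x)/2) ((y' - x')/2))) := by
  simp [eDist, EReal.coe_ne_top]

lemma eDist_comm (p q : ℝ × EReal) : eDist p q = eDist q p := by
  unfold eDist
  by_cases h1 : p.2 = ⊤ <;> by_cases h2 : q.2 = ⊤ <;>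
    simp [h1, h2, abs_sub_comm, max_comm, min_comm]

lemma eDist_coe_le_pers (x y x' y' : ℝ) :
    eDist (x, (y : EReal)) (x', (y' : EReal))
      ≤ ENNReal.ofReal (max ((y - x)/2) ((y' - x')/2)) := by
  rw [eDist_coe_coe]
  exact ENNReal.ofReal_le_ofReal (min_le_right _ _)

lemma half_le_max (x y t : ℝ) : (y - x)/2 ≤ max |x - t| |y - t| := by
  have h1 : t - x ≤ |x - t| := by rw [abs_sub_comm]; exact le_abs_self _
  have h2 : y - t ≤ |y - t| := le_abs_self _
  rcases max_cases |x - t| |y - t| with ⟨h, h'⟩ | ⟨h, h'⟩ <;> rw [h] <;> linarith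

lemma eDist_coe_diag (x y t : ℝ) :
    eDist (x, (y : EReal)) (t, (t : EReal)) = ENNReal.ofReal (max ((y - x)/2) 0) := by
  rw [eDist_coe_coe]
  congr 1
  have ht : (t - t)/2 = 0 := by ring
  rw [ht]
  rcases le_or_gt x y with h | h
  · have hmax : max ((y - x)/2) 0 = (y - x)/2 := max_eq_left (by linarith)
    rw [hmax]
    exact min_eq_right (half_le_max x y t)
  · have hmax : max ((y - x)/2) 0 = 0 := max_eq_right (by linarith)
    rw [hmax]
    exact min_eq_right (le_max_of_le_right (abs_nonneg _))

lemma eDist_diag_diag {p q : ℝ × EReal} (hp : isDiag p) (hq : isDiag q) : eDist p q = 0 := by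
  obtain ⟨x, px⟩ := p
  obtain ⟨t, qt⟩ := q
  unfold isDiag at hp hq
  simp only at hp hq
  subst hp; subst hq
  rw [eDist_coe_diag]
  simp

lemma eDist_diag_right {p q q' : ℝ × EReal} (hgp : Good p) (hq : isDiag q) (hq' : isDiag q') :
    eDist p q = eDist p q' := by
  obtain ⟨x, px⟩ := p
  obtain ⟨t, qt⟩ := q
  obtain ⟨s, q't⟩ := q'
  unfold isDiag at hq hq'
  simp only at hq hq'
  subst hq; subst hq'
  rcases hgp with htop | ⟨y, hy⟩
  · simp only at htop; subst htop
    rw [eDist_top_ne x (by exact EReal.coe_ne_top t), eDist_top_ne x (by exact EReal.coe_ne_top s)]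
  · simp only at hy; subst hy
    rw [eDist_coe_diag, eDist_coe_diag]

lemma eDist_congr {p p' q q' : ℝ × EReal} (hgp : Good p) (hgq' : Good q')
    (hp : p = p' ∨ (isDiag p ∧ isDiag p')) (hq : q = q' ∨ (isDiag q ∧ isDiag q')) :
    eDist p q = eDist p' q' := by
  rcases hp with rfl | ⟨hd1, hd2⟩ <;> rcases hq with rfl | ⟨he1, he2⟩
  · rfl
  · exact eDist_diag_right hgp he1 he2
  · rw [eDist_comm, eDist_comm p' q]
    exact eDist_diag_right hgq' hd1 hd2
  · rw [eDist_diag_diag hd1 he1, eDist_diag_diag hd2 he2]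

/-- Equivalence between two subsets of ℕ that are both finite of the same size
or both infinite. -/
lemma nonempty_equiv_of_sets {s t : Set ℕ}
    (h : (s.Finite ∧ t.Finite ∧ s.ncard = t.ncard) ∨ (s.Infinite ∧ t.Infinite)) :
    Nonempty (↥s ≃ ↥t) := by
  rcases h with ⟨hs, ht, hcard⟩ | ⟨hs, ht⟩
  · haveI := hs.to_subtype
    haveI := ht.to_subtype
    exact Finite.card_eq.mp (by rw [Nat.card_coe_set_eq, Nat.card_coe_set_eq]; exact hcard)
  · haveI := hs.to_subtype
    haveI := ht.to_subtype
    obtain ⟨es⟩ := nonempty_denumerable ↥s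
    obtain ⟨et⟩ := nonempty_denumerable ↥t
    exact ⟨(@Denumerable.eqv _ es).trans (@Denumerable.eqv _ et).symm⟩

/-- Extend a partial bijection between finite subsets of ℕ to a bijection of ℕ. -/
lemma extend_partial {D R : Set ℕ} (hD : D.Finite) (hR : R.Finite) (e : ↥D ≃ ↥R) :
    ∃ τ : ℕ → ℕ, Function.Bijective τ ∧ (∀ i (h : i ∈ D), τ i = (e ⟨i, h⟩ : ℕ))
      ∧ (∀ i, i ∉ D → τ i ∉ R) := by
  classical
  have hDc : (Dᶜ : Set ℕ).Infinite := hD.infinite_compl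
  have hRc : (Rᶜ : Set ℕ).Infinite := hR.infinite_compl
  obtain ⟨einf⟩ := nonempty_equiv_of_sets (Or.inr ⟨hDc, hRc⟩)
  set τ : ℕ ≃ ℕ := (Equiv.Set.sumCompl D).symm.trans ((e.sumCongr einf).trans (Equiv.Set.sumCompl R))
    with hτ
  refine ⟨τ, τ.bijective, ?_, ?_⟩
  · intro i h
    simp only [hτ, Equiv.trans_apply]
    rw [Equiv.Set.sumCompl_symm_apply_of_mem h]
    rfl
  · intro i h
    simp only [hτ, Equiv.trans_apply]
    rw [Equiv.Set.sumCompl_symm_apply_of_notMem h]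
    simp only [Equiv.sumCongr_apply, Sum.map_inr]
    exact (einf ⟨i, h⟩).2

end Stage4
def IsRepSeq {M : Type*} [TopologicalSpace M] (φ : M → ℝ) (a : ℕ → ℝ × EReal) : Prop :=
  (∃ k : ℝ, a 0 = (k, ⊤) ∧ 0 < multInf φ k) ∧
  (∀ i : ℕ, 0 < i →
    (∃ x y : ℝ, a i = (x, (y : EReal)) ∧ x < y ∧ 0 < mult φ (x, y)) ∨
    (∃ x : ℝ, a i = (x, (x : EReal)))) ∧
  (∀ x y : ℝ, x < y → 0 < mult φ (x, y) →
    Set.ncard {i : ℕ | a i = (x, (y : EReal))} = (mult φ (x, y)).toNat) ∧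
  {i : ℕ | ∃ x : ℝ, a i = (x, (x : EReal))}.Infinite

section Stage5

set_option linter.unusedSectionVars false
open Classical

noncomputable def persA (a : ℕ → ℝ × EReal) (i : ℕ) : ℝ := (a i).2.toReal - (a i).1

noncomputable def lab (a : ℕ → ℝ × EReal) (i : ℕ) : Option (ℝ × EReal) :=
  if isDiag (a i) then none else some (a i)

lemma lab_eq_none {a : ℕ → ℝ × EReal} {i : ℕ} : lab a i = none ↔ isDiag (a i) := by
  unfold lab; split_ifs with h <;> simp [h]

lemma lab_eq_some {a : ℕ → ℝ × EReal} {i : ℕ} {p : ℝ × EReal} :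
    lab a i = some p ↔ (¬ isDiag (a i) ∧ a i = p) := by
  unfold lab; split_ifs with h <;> simp [h]

variable {M : Type*} [TopologicalSpace M] [CompactSpace M] [ConnectedSpace M]
  [LocallyConnectedSpace M] {φ : M → ℝ} (hφ : Continuous φ) {a : ℕ → ℝ × EReal}

lemma repSeq_good (ha : IsRepSeq φ a) (i : ℕ) : Good (a i) := by
  rcases Nat.eq_zero_or_pos i with rfl | hi
  · obtain ⟨k, hk, -⟩ := ha.1
    rw [hk]; exact Or.inl rfl
  · rcases ha.2.1 i hi with ⟨x, y, hxy, -⟩ | ⟨x, hx⟩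
    · rw [hxy]; exact Or.inr ⟨y, rfl⟩
    · rw [hx]; exact Or.inr ⟨x, rfl⟩

lemma repSeq_snd_coe (ha : IsRepSeq φ a) {i : ℕ} (hi : 0 < i) :
    ∃ x y : ℝ, a i = (x, (y : EReal)) ∧ x ≤ y ∧ persA a i = y - x ∧
      (x = y ∨ (x < y ∧ 0 < mult φ (x, y))) := by
  rcases ha.2.1 i hi with ⟨x, y, hxy, hlt, hm⟩ | ⟨x, hx⟩
  · exact ⟨x, y, hxy, hlt.le, by simp [persA, hxy], Or.inr ⟨hlt, hm⟩⟩
  · exact ⟨x, x, hx, le_rfl, by simp [persA, hx], Or.inl rfl⟩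

include hφ in
lemma repSeq_zero (ha : IsRepSeq φ a) {Pm : M} (hPm : ∀ Q, φ Pm ≤ φ Q) :
    a 0 = (φ Pm, ⊤) := by
  obtain ⟨k, hk, hpos⟩ := ha.1
  rw [hk, multInf_pos_eq_min hφ hpos hPm]

lemma repSeq_fiber_mult (ha : IsRepSeq φ a) {x y : ℝ} (hxy : x < y)
    (hne : {i | a i = (x, (y : EReal))}.Nonempty) : 0 < mult φ (x, y) := by
  obtain ⟨i, hi⟩ := hne
  simp only [Set.mem_setOf_eq] at hi
  have hi0 : 0 < i := by
    rcases Nat.eq_zero_or_pos i with rfl | h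
    · obtain ⟨k, hk, -⟩ := ha.1
      rw [hk] at hi
      have := congrArg Prod.snd hi
      simp only at this
      exact absurd this (by simp)
    · exact h
  rcases ha.2.1 i hi0 with ⟨x', y', hxy', hlt, hm⟩ | ⟨x', hx'⟩
  · rw [hi] at hxy'
    obtain ⟨h1, h2⟩ := Prod.ext_iff.mp hxy'
    simp only at h1 h2
    rw [EReal.coe_eq_coe_iff] at h2
    rw [h1, h2]; exact hm
  · rw [hi] at hx'
    obtain ⟨h1, h2⟩ := Prod.ext_iff.mp hx'
    simp only at h1 h2
    rw [EReal.coe_eq_coe_iff] at h2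
    exact absurd (h1.trans h2.symm) (ne_of_lt hxy)

lemma repSeq_fiber_finite (ha : IsRepSeq φ a) {x y : ℝ} (hxy : x < y) :
    {i | a i = (x, (y : EReal))}.Finite := by
  rcases Set.eq_empty_or_nonempty {i | a i = (x, (y : EReal))} with he | hne
  · rw [he]; exact Set.finite_empty
  · have hm := repSeq_fiber_mult ha hxy hne
    have hc := ha.2.2.1 x y hxy hm
    by_contra hinf
    have hinf' : Set.Infinite {i | a i = (x, (y : EReal))} := hinf
    rw [hinf'.ncard] at hc
    omega

lemma repSeq_fiber_ncard (ha : IsRepSeq φ a) {x y : ℝ} (hxy : x < y) :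
    {i | a i = (x, (y : EReal))}.ncard
      = (if 0 < mult φ (x, y) then (mult φ (x, y)).toNat else 0) := by
  split_ifs with h
  · exact ha.2.2.1 x y hxy h
  · have : {i | a i = (x, (y : EReal))} = ∅ := by
      rcases Set.eq_empty_or_nonempty {i | a i = (x, (y : EReal))} with he | hne
      · exact he
      · exact absurd (repSeq_fiber_mult ha hxy hne) h
    rw [this, Set.ncard_empty]

lemma repSeq_diag_set (ha : IsRepSeq φ a) :
    {i | isDiag (a i)} = {i | ∃ x : ℝ, a i = (x, (x : EReal))} := by
  ext i
  simp only [Set.mem_setOf_eq]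
  constructor
  · intro h
    exact ⟨(a i).1, Prod.ext_iff.mpr ⟨rfl, h⟩⟩
  · rintro ⟨x, hx⟩
    rw [hx]; rfl

lemma repSeq_diag_infinite (ha : IsRepSeq φ a) : {i | isDiag (a i)}.Infinite := by
  rw [repSeq_diag_set ha]; exact ha.2.2.2

include hφ in
lemma repSeq_pers_finite (ha : IsRepSeq φ a) {c : ℝ} (hc : 0 < c) :
    {i | 0 < i ∧ c ≤ persA a i}.Finite := by
  have hS := mult_finite hφ (show (0:ℝ) < c/2 by linarith)
  apply Set.Finite.subset (hS.biUnion
    (fun p hp => repSeq_fiber_finite ha (mult_pos_lt hp.1)))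
  rintro i ⟨hi, hpers⟩
  obtain ⟨x, y, hxy, hle, hpa, hcase⟩ := repSeq_snd_coe ha hi
  rcases hcase with heq | ⟨hlt, hm⟩
  · rw [hpa, heq] at hpers; linarith
  · simp only [Set.mem_iUnion]
    refine ⟨(x, y), ⟨hm, by simp only; rw [hpa] at hpers; linarith⟩, ?_⟩
    simpa using hxy

/-- The fiber of a representative sequence over the point at infinity is `{0}`. -/
lemma lab_fiber_top (ha : IsRepSeq φ a) {k : ℝ} (hk : a 0 = (k, ⊤)) :
    {i | lab a i = some (k, (⊤ : EReal))} = {0} := by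
  ext i
  simp only [Set.mem_setOf_eq, Set.mem_singleton_iff, lab_eq_some]
  constructor
  · rintro ⟨hd, hp⟩
    by_contra h0
    have hi : 0 < i := Nat.pos_of_ne_zero h0
    obtain ⟨x, y, hxy, -⟩ := repSeq_snd_coe ha hi
    rw [hxy] at hp
    have := congrArg Prod.snd hp
    simp only at this
    exact EReal.coe_ne_top y this
  · rintro rfl
    refine ⟨?_, hk⟩
    rw [hk]
    unfold isDiag
    simp

lemma lab_fiber_proper (ha : IsRepSeq φ a) {x y : ℝ} (hxy : x < y) :
    {i | lab a i = some (x, (y : EReal))} = {i | a i = (x, (y : EReal))} := by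
  ext i
  simp only [Set.mem_setOf_eq, lab_eq_some]
  constructor
  · rintro ⟨-, h⟩; exact h
  · intro h
    refine ⟨?_, h⟩
    intro hd
    unfold isDiag at hd
    rw [h] at hd
    simp only at hd
    rw [EReal.coe_eq_coe_iff] at hd
    exact (ne_of_lt hxy) hd.symm

lemma lab_fiber_junk (ha : IsRepSeq φ a) {k : ℝ} (hk : a 0 = (k, ⊤)) {p : ℝ × EReal}
    (h1 : p ≠ (k, (⊤ : EReal))) (h2 : ¬ ∃ x y : ℝ, p = (x, (y : EReal)) ∧ x < y) :
    {i | lab a i = some p} = ∅ := by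
  rw [Set.eq_empty_iff_forall_notMem]
  intro i hi
  simp only [Set.mem_setOf_eq, lab_eq_some] at hi
  obtain ⟨hd, hp⟩ := hi
  rcases Nat.eq_zero_or_pos i with rfl | hpos
  · rw [hk] at hp; exact h1 hp.symm
  · obtain ⟨x, y, hxy, hle, -, hcase⟩ := repSeq_snd_coe ha hpos
    rcases lt_or_eq_of_le hle with hlt | heq
    · exact h2 ⟨x, y, hp ▸ hxy ▸ rfl, hlt⟩
    · apply hd
      rw [hxy, ← heq]
      rfl

end Stage5

section Pairing

set_option linter.unusedSectionVars false
open Classical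

variable {M N : Type*} [TopologicalSpace M] [CompactSpace M] [ConnectedSpace M]
  [LocallyConnectedSpace M] [TopologicalSpace N] [CompactSpace N] [ConnectedSpace N]
  [LocallyConnectedSpace N] {φ : M → ℝ} {ψ : N → ℝ}

lemma seq_pairing {a b : ℕ → ℝ × EReal} (ha : IsRepSeq φ a) (hb : IsRepSeq ψ b)
    {k : ℝ} (ha0 : a 0 = (k, ⊤)) (hb0 : b 0 = (k, ⊤))
    (hfib : ∀ x y : ℝ, x < y →
      {i | a i = (x, (y : EReal))}.ncard = {j | b j = (x, (y : EReal))}.ncard) :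
    ∃ τ : ℕ → ℕ, Function.Bijective τ ∧ τ 0 = 0 ∧
      ∀ i, b (τ i) = a i ∨ (isDiag (a i) ∧ isDiag (b (τ i))) := by
  have he : ∀ l : Option (ℝ × EReal),
      Nonempty ({i // lab a i = l} ≃ {j // lab b j = l}) := by
    intro l
    match l with
    | none =>
      have h1 : {i | lab a i = none} = {i | isDiag (a i)} := by
        ext i; simp [lab_eq_none]
      have h2 : {j | lab b j = none} = {j | isDiag (b j)} := by
        ext j; simp [lab_eq_none]
      have := nonempty_equiv_of_sets (s := {i | lab a i = none}) (t := {j | lab b j = none})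
        (Or.inr ⟨h1 ▸ repSeq_diag_infinite ha, h2 ▸ repSeq_diag_infinite hb⟩)
      exact this
    | some p =>
      by_cases hp1 : p = (k, (⊤ : EReal))
      · subst hp1
        have h1 := lab_fiber_top ha ha0
        have h2 := lab_fiber_top hb hb0
        have := nonempty_equiv_of_sets (s := {i | lab a i = some (k, (⊤ : EReal))})
          (t := {j | lab b j = some (k, (⊤ : EReal))})
          (Or.inl ⟨h1 ▸ Set.finite_singleton 0, h2 ▸ Set.finite_singleton 0, by
            rw [h1, h2]⟩)
        exact this
      · by_cases hp2 : ∃ x y : ℝ, p = (x, (y : EReal)) ∧ x < y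
        · obtain ⟨x, y, rfl, hxy⟩ := hp2
          have h1 := lab_fiber_proper ha hxy
          have h2 := lab_fiber_proper hb hxy
          have := nonempty_equiv_of_sets (s := {i | lab a i = some (x, (y : EReal))})
            (t := {j | lab b j = some (x, (y : EReal))})
            (Or.inl ⟨h1 ▸ repSeq_fiber_finite ha hxy, h2 ▸ repSeq_fiber_finite hb hxy, by
              rw [h1, h2]; exact hfib x y hxy⟩)
          exact this
        · have h1 := lab_fiber_junk ha ha0 hp1 hp2
          have h2 := lab_fiber_junk hb hb0 hp1 hp2
          have := nonempty_equiv_of_sets (s := {i | lab a i = some p})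
            (t := {j | lab b j = some p})
            (Or.inl ⟨h1 ▸ Set.finite_empty, h2 ▸ Set.finite_empty, by rw [h1, h2]⟩)
          exact this
  set e := fun l => Classical.choice (he l) with hedef
  set τE := Equiv.ofFiberEquiv e with hτE
  have hmap : ∀ i, lab b (τE i) = lab a i := fun i => Equiv.ofFiberEquiv_map e i
  refine ⟨τE, τE.bijective, ?_, ?_⟩
  · have h0 : lab a 0 = some (k, (⊤ : EReal)) := by
      rw [lab_eq_some]
      refine ⟨?_, ha0⟩
      rw [ha0]; unfold isDiag; simp
    have : τE 0 ∈ {j | lab b j = some (k, (⊤ : EReal))} := by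
      simp only [Set.mem_setOf_eq, hmap 0, h0]
    rwa [lab_fiber_top hb hb0, Set.mem_singleton_iff] at this
  · intro i
    rcases hcase : lab a i with - | p
    · have hai : isDiag (a i) := lab_eq_none.mp hcase
      have hbi : isDiag (b (τE i)) := lab_eq_none.mp ((hmap i).trans hcase)
      exact Or.inr ⟨hai, hbi⟩
    · have hai := (lab_eq_some.mp hcase).2
      have hbi := (lab_eq_some.mp ((hmap i).trans hcase)).2
      exact Or.inl (hbi.trans hai.symm)

end Pairing
section Stage6

set_option linter.unusedSectionVars false

lemma eDist_coe_ne_top (x y x' y' : ℝ) : eDist (x, (y : EReal)) (x', (y' : EReal)) ≠ ⊤ := by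
  rw [eDist_coe_coe]; exact ENNReal.ofReal_ne_top

lemma eDist_lt_analysis {x y x' y' t : ℝ} (hxy : x ≤ y)
    (ht2 : t ≤ (y - x)/2) (h : eDist (x, (y : EReal)) (x', (y' : EReal)) < ENNReal.ofReal t) :
    max |x - x'| |y - y'| < t := by
  rw [eDist_coe_coe] at h
  have ht : 0 < t := by
    by_contra h'
    push_neg at h'
    rw [ENNReal.ofReal_eq_zero.mpr h'] at h
    simp at h
  rw [ENNReal.ofReal_lt_ofReal_iff ht] at h
  have hmp : t ≤ max ((y - x)/2) ((y' - x')/2) := le_trans ht2 (le_max_left _ _)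
  rcases min_lt_iff.mp h with h' | h'
  · exact h'
  · linarith

variable {M N : Type*} [TopologicalSpace M] [CompactSpace M] [ConnectedSpace M]
  [LocallyConnectedSpace M] [TopologicalSpace N] [CompactSpace N] [ConnectedSpace N]
  [LocallyConnectedSpace N] {φ : M → ℝ} {ψ : N → ℝ} (hφ : Continuous φ) (hψ : Continuous ψ)
  {a b : ℕ → ℝ × EReal}

include hφ hψ in
lemma sup_attained (ha : IsRepSeq φ a) (hb : IsRepSeq ψ b)
    (σ : ℕ → ℕ) (hσ : Function.Bijective σ) (h0 : σ 0 = 0) :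
    ∃ i₀ : ℕ, (⨆ i, eDist (a i) (b (σ i))) = eDist (a i₀) (b (σ i₀)) ∧
      (⨆ i, eDist (a i) (b (σ i))) ≠ ⊤ := by
  set d : ℕ → ℝ≥0∞ := fun i => eDist (a i) (b (σ i)) with hd
  obtain ⟨k, hk, -⟩ := ha.1
  obtain ⟨k', hk', -⟩ := hb.1
  have hd0 : d 0 ≠ ⊤ := by
    rw [hd]; simp only [h0, hk, hk', eDist_top_top]; exact ENNReal.ofReal_ne_top
  have hσne : ∀ i, 0 < i → 0 < σ i := by
    intro i hi
    rcases Nat.eq_zero_or_pos (σ i) with h | h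
    · exact absurd (hσ.1 (h.trans h0.symm)) (Nat.pos_iff_ne_zero.mp hi)
    · exact h
  have hdcoe : ∀ i, 0 < i → d i ≠ ⊤ ∧
      d i ≤ ENNReal.ofReal (max (persA a i / 2) (persA b (σ i) / 2)) ∧
      0 ≤ persA a i ∧ 0 ≤ persA b (σ i) := by
    intro i hi
    obtain ⟨x, y, hxy, hle, hpa, -⟩ := repSeq_snd_coe ha hi
    obtain ⟨x', y', hxy', hle', hpb, -⟩ := repSeq_snd_coe hb (hσne i hi)
    have hdi : d i = eDist (x, (y : EReal)) (x', (y' : EReal)) := by simp only [hd]; rw [hxy, hxy']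
    refine ⟨by rw [hdi]; exact eDist_coe_ne_top x y x' y', ?_, by rw [hpa]; linarith,
      by rw [hpb]; linarith⟩
    rw [hdi, hpa, hpb]
    exact eDist_coe_le_pers x y x' y'
  have hF : ∀ c : ℝ, 0 < c → {i | ENNReal.ofReal c ≤ d i}.Finite := by
    intro c hc
    have hsub : {i | ENNReal.ofReal c ≤ d i} ⊆
        ({0} : Set ℕ) ∪ {i | 0 < i ∧ 2*c ≤ persA a i}
          ∪ (σ ⁻¹' {j | 0 < j ∧ 2*c ≤ persA b j}) := by
      intro i hi
      simp only [Set.mem_setOf_eq] at hi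
      rcases Nat.eq_zero_or_pos i with rfl | hpos
      · exact Or.inl (Or.inl rfl)
      · obtain ⟨-, hle, hpa0, hpb0⟩ := hdcoe i hpos
        have hmax : c ≤ max (persA a i / 2) (persA b (σ i) / 2) := by
          rw [← ENNReal.ofReal_le_ofReal_iff (by positivity)]
          exact le_trans hi hle
        rcases le_max_iff.mp hmax with h | h
        · exact Or.inl (Or.inr ⟨hpos, by linarith⟩)
        · exact Or.inr ⟨hσne i hpos, by linarith⟩
    apply Set.Finite.subset _ hsub
    apply Set.Finite.union
    · exact (Set.finite_singleton 0).union (repSeq_pers_finite hφ ha (by linarith))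
    · exact (repSeq_pers_finite hψ hb (show (0:ℝ) < 2*c by linarith)).preimage
        (Set.injOn_of_injective hσ.1)
  rcases eq_or_ne (⨆ i, d i) 0 with hS | hS
  · refine ⟨0, ?_, ?_⟩
    · rw [hS]
      have : d 0 ≤ 0 := hS ▸ le_iSup d 0
      exact (le_antisymm this zero_le).symm
    · rw [hS]; exact ENNReal.zero_ne_top
  · have hpos : 0 < ⨆ i, d i := pos_iff_ne_zero.mpr hS
    obtain ⟨c', hc'0, hc'S⟩ := exists_between hpos
    have hc'top : c' ≠ ⊤ := ne_top_of_lt hc'S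
    set creal := c'.toReal with hcreal
    have hcrealpos : 0 < creal := ENNReal.toReal_pos hc'0.ne' hc'top
    have hofReal : ENNReal.ofReal creal = c' := ENNReal.ofReal_toReal hc'top
    obtain ⟨i₁, hi₁⟩ := lt_iSup_iff.mp hc'S
    have hFfin := hF creal hcrealpos
    have hi₁F : i₁ ∈ {i | ENNReal.ofReal creal ≤ d i} := by
      simp only [Set.mem_setOf_eq, hofReal]; exact hi₁.le
    obtain ⟨i₀, hi₀F, hi₀max⟩ :=
      Set.exists_max_image _ d hFfin ⟨i₁, hi₁F⟩
    have hub : ∀ i, d i ≤ d i₀ := by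
      intro i
      by_cases hiF : i ∈ {i | ENNReal.ofReal creal ≤ d i}
      · exact hi₀max i hiF
      · simp only [Set.mem_setOf_eq, not_le] at hiF
        exact le_trans (le_trans hiF.le (hofReal ▸ hi₁.le)) (hi₀max i₁ hi₁F)
    have heq : (⨆ i, d i) = d i₀ := le_antisymm (iSup_le hub) (le_iSup d i₀)
    refine ⟨i₀, heq, ?_⟩
    rw [heq]
    rcases Nat.eq_zero_or_pos i₀ with rfl | hpos'
    · exact hd0
    · exact (hdcoe i₀ hpos').1

end Stage6
noncomputable def dMatchSeq (a b : ℕ → ℝ × EReal) : ℝ≥0∞ :=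
  ⨅ σ : {σ : ℕ → ℕ // Function.Bijective σ}, ⨆ i : ℕ, eDist (a i) (b (σ.1 i))

noncomputable def dMatch {M N : Type*} [TopologicalSpace M] [TopologicalSpace N]
    (φ : M → ℝ) (ψ : N → ℝ) : ℝ≥0∞ :=
  sInf {s : ℝ≥0∞ | ∃ a b, IsRepSeq φ a ∧ IsRepSeq ψ b ∧ s = dMatchSeq a b}

section Stage7

set_option linter.unusedSectionVars false

variable {M N : Type*} [TopologicalSpace M] [CompactSpace M] [ConnectedSpace M]
  [LocallyConnectedSpace M] [TopologicalSpace N] [CompactSpace N] [ConnectedSpace N]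
  [LocallyConnectedSpace N] {φ : M → ℝ} {ψ : N → ℝ} (hφ : Continuous φ) (hψ : Continuous ψ)

include hφ in
lemma repSeq_transfer {a a' : ℕ → ℝ × EReal} (ha : IsRepSeq φ a) (ha' : IsRepSeq φ a') :
    ∃ τ : ℕ → ℕ, Function.Bijective τ ∧ τ 0 = 0 ∧
      ∀ i, a' (τ i) = a i ∨ (isDiag (a i) ∧ isDiag (a' (τ i))) := by
  obtain ⟨Pm, hPm⟩ := exists_min hφ
  apply seq_pairing ha ha' (repSeq_zero hφ ha hPm) (repSeq_zero hφ ha' hPm)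
  intro x y hxy
  rw [repSeq_fiber_ncard ha hxy, repSeq_fiber_ncard ha' hxy]

include hφ hψ in
lemma dMatchSeq_le_seq {a b a' b' : ℕ → ℝ × EReal} (ha : IsRepSeq φ a) (hb : IsRepSeq ψ b)
    (ha' : IsRepSeq φ a') (hb' : IsRepSeq ψ b') : dMatchSeq a b ≤ dMatchSeq a' b' := by
  obtain ⟨τa, hτa, hτa0, hrel_a⟩ := repSeq_transfer hφ ha ha'
  obtain ⟨τb, hτb, hτb0, hrel_b⟩ := repSeq_transfer hψ hb hb'
  set τbE := Equiv.ofBijective τb hτb with hτbE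
  apply le_iInf
  rintro ⟨σ', hσ'⟩
  set σ := fun i => τbE.symm (σ' (τa i)) with hσdef
  have hσ : Function.Bijective σ :=
    (τbE.symm.bijective.comp hσ').comp hτa
  calc dMatchSeq a b ≤ ⨆ i, eDist (a i) (b (σ i)) := iInf_le (fun σ : {σ : ℕ → ℕ // Function.Bijective σ} => ⨆ i, eDist (a i) (b (σ.1 i))) ⟨σ, hσ⟩
    _ ≤ ⨆ j, eDist (a' j) (b' (σ' j)) := by
        apply iSup_le
        intro i
        have hτbapp : τb (σ i) = σ' (τa i) := τbE.apply_symm_apply _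
        have hkey : eDist (a i) (b (σ i)) = eDist (a' (τa i)) (b' (σ' (τa i))) := by
          apply eDist_congr (repSeq_good ha i) (repSeq_good hb' _)
          · rcases hrel_a i with h | h
            · exact Or.inl h.symm
            · exact Or.inr h
          · rcases hrel_b (σ i) with h | h
            · refine Or.inl ?_
              rw [← hτbapp, h]
            · refine Or.inr ⟨h.1, ?_⟩
              rw [← hτbapp]
              exact h.2
        rw [hkey]
        exact le_iSup (fun j => eDist (a' j) (b' (σ' j))) (τa i)

include hφ hψ in
lemma dMatch_eq_dMatchSeq {a b : ℕ → ℝ × EReal} (ha : IsRepSeq φ a) (hb : IsRepSeq ψ b) :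
    dMatch φ ψ = dMatchSeq a b := by
  apply le_antisymm
  · exact sInf_le ⟨a, b, ha, hb, rfl⟩
  · apply le_sInf
    rintro s ⟨a', b', ha', hb', rfl⟩
    exact dMatchSeq_le_seq hφ hψ ha hb ha' hb'

include hφ hψ in
lemma dMatchSeq_ne_top {a b : ℕ → ℝ × EReal} (ha : IsRepSeq φ a) (hb : IsRepSeq ψ b) :
    dMatchSeq a b ≠ ⊤ := by
  obtain ⟨i₀, heq, hne⟩ := sup_attained hφ hψ ha hb id Function.bijective_id rfl
  intro h
  apply hne
  have : dMatchSeq a b ≤ ⨆ i, eDist (a i) (b (id i)) := iInf_le (fun σ : {σ : ℕ → ℕ // Function.Bijective σ} => ⨆ i, eDist (a i) (b (σ.1 i))) ⟨id, Function.bijective_id⟩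
  rw [h] at this
  exact top_le_iff.mp this

end Stage7
section Stage8a

set_option linter.unusedSectionVars false

variable {M N : Type*} [TopologicalSpace M] [CompactSpace M] [ConnectedSpace M]
  [LocallyConnectedSpace M] [TopologicalSpace N] [CompactSpace N] [ConnectedSpace N]
  [LocallyConnectedSpace N] {φ : M → ℝ} {ψ : N → ℝ} (hφ : Continuous φ) (hψ : Continuous ψ)
  {a b : ℕ → ℝ × EReal}

include hψ in
lemma fiber_map (ha : IsRepSeq φ a) (hb : IsRepSeq ψ b)
    (hsmall : ∀ ε : ℝ, 0 < ε → ∃ σ : ℕ → ℕ, Function.Bijective σ ∧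
      ∀ i, eDist (a i) (b (σ i)) < ENNReal.ofReal ε)
    {x y : ℝ} (hxy : x < y) (hne : {i | a i = (x, (y : EReal))}.Nonempty) :
    0 < mult ψ (x, y) ∧
      {i | a i = (x, (y : EReal))}.ncard ≤ {j | b j = (x, (y : EReal))}.ncard := by
  set s := (y - x)/2 with hs
  have hspos : 0 < s := by rw [hs]; linarith
  have hSfin : {q : ℝ × ℝ | 0 < mult ψ q ∧ 2*(s/2) ≤ q.2 - q.1}.Finite :=
    mult_finite hψ (by linarith)
  set S' := {q : ℝ × ℝ | 0 < mult ψ q ∧ 2*(s/2) ≤ q.2 - q.1} \ {(x, y)} with hS'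
  have hS'fin : S'.Finite := hSfin.diff
  have hfpos : ∀ q ∈ S', 0 < max |x - q.1| |y - q.2| := by
    rintro q ⟨-, hq2⟩
    rcases lt_or_ge 0 (max |x - q.1| |y - q.2|) with h | h
    · exact h
    · exfalso
      have h1 : |x - q.1| ≤ 0 := le_trans (le_max_left _ _) h
      have h2 : |y - q.2| ≤ 0 := le_trans (le_max_right _ _) h
      have e1 : x = q.1 := by have := abs_nonneg (x - q.1); have := abs_eq_zero.mp (le_antisymm h1 (abs_nonneg _)); linarith
      have e2 : y = q.2 := by have := abs_eq_zero.mp (le_antisymm h2 (abs_nonneg _)); linarith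
      exact hq2 (by rw [Set.mem_singleton_iff]; exact Prod.ext_iff.mpr ⟨e1.symm, e2.symm⟩)
  obtain ⟨ρ', hρ'pos, hρ'le⟩ : ∃ ρ' : ℝ, 0 < ρ' ∧ ∀ q ∈ S', ρ' ≤ max |x - q.1| |y - q.2| := by
    rcases Set.eq_empty_or_nonempty S' with hE | hNE
    · exact ⟨1, one_pos, by rw [hE]; simp⟩
    · obtain ⟨q₀, hq₀, hq₀min⟩ :=
        Set.exists_min_image S' (fun q => max |x - q.1| |y - q.2|) hS'fin hNE
      exact ⟨_, hfpos q₀ hq₀, hq₀min⟩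
  set ρ := min (s/2) ρ' with hρ
  have hρpos : 0 < ρ := lt_min (by linarith) hρ'pos
  obtain ⟨σ, hσ, hσlt⟩ := hsmall ρ hρpos
  have hkey : ∀ i ∈ {i | a i = (x, (y : EReal))}, σ i ∈ {j | b j = (x, (y : EReal))}
      ∧ 0 < mult ψ (x, y) := by
    intro i hi
    simp only [Set.mem_setOf_eq] at hi
    have hd := hσlt i
    rw [hi] at hd
    have hσi : 0 < σ i := by
      rcases Nat.eq_zero_or_pos (σ i) with h | h
      · exfalso
        obtain ⟨k', hk', -⟩ := hb.1
        rw [h, hk'] at hd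
        rw [eDist_ne_top (p := (x, (y : EReal))) k' (by simp)] at hd
        exact (lt_irrefl _ (lt_of_le_of_lt le_top hd)).elim
      · exact h
    obtain ⟨x', y', hxy', hle', hpb, hcase'⟩ := repSeq_snd_coe hb hσi
    rw [hxy'] at hd
    have hmax := eDist_lt_analysis hxy.le (by rw [hρ, hs]; exact (min_le_left _ _).trans (by linarith)) hd
    have habs1 : |x - x'| < ρ := lt_of_le_of_lt (le_max_left _ _) hmax
    have habs2 : |y - y'| < ρ := lt_of_le_of_lt (le_max_right _ _) hmax
    have hb1 := abs_lt.mp habs1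
    have hb2 := abs_lt.mp habs2
    have hρs : ρ ≤ s/2 := min_le_left _ _
    have hpers' : s ≤ y' - x' := by rw [hs] at *; linarith
    have hmult' : 0 < mult ψ (x', y') := by
      rcases hcase' with heq | ⟨-, hm⟩
      · exfalso; rw [heq] at hpers'; linarith
      · exact hm
    have heqp : (x', y') = (x, y) := by
      by_contra hne'
      have hq : (x', y') ∈ S' := ⟨⟨hmult', by simp only; linarith⟩, by
        simp only [Set.mem_singleton_iff]
        intro h; exact hne' h⟩
      have := hρ'le _ hq
      simp only at this
      have : ρ' ≤ max |x - x'| |y - y'| := this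
      have hρρ' : ρ ≤ ρ' := min_le_right _ _
      linarith [lt_of_le_of_lt (le_trans hρρ' this) hmax]
    obtain ⟨e1, e2⟩ := Prod.ext_iff.mp heqp
    simp only at e1 e2
    constructor
    · simp only [Set.mem_setOf_eq]
      rw [hxy', e1, e2]
    · rw [← e1, ← e2]; exact hmult'
  obtain ⟨i₀, hi₀⟩ := hne
  refine ⟨(hkey i₀ hi₀).2, ?_⟩
  have himg : σ '' {i | a i = (x, (y : EReal))} ⊆ {j | b j = (x, (y : EReal))} := by
    rintro _ ⟨i, hi, rfl⟩
    exact (hkey i hi).1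
  calc {i | a i = (x, (y : EReal))}.ncard
      = (σ '' {i | a i = (x, (y : EReal))}).ncard :=
        (Set.ncard_image_of_injective _ hσ.1).symm
    _ ≤ {j | b j = (x, (y : EReal))}.ncard :=
        Set.ncard_le_ncard himg (repSeq_fiber_finite hb hxy)

include hφ hψ in
lemma eta_zero_pairing (ha : IsRepSeq φ a) (hb : IsRepSeq ψ b)
    (hzero : dMatchSeq a b = 0) :
    ∃ τ : ℕ → ℕ, Function.Bijective τ ∧ τ 0 = 0 ∧
      ∀ i, b (τ i) = a i ∨ (isDiag (a i) ∧ isDiag (b (τ i))) := by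
  have hsmall : ∀ ε : ℝ, 0 < ε → ∃ σ : ℕ → ℕ, Function.Bijective σ ∧
      ∀ i, eDist (a i) (b (σ i)) < ENNReal.ofReal ε := by
    intro ε hε
    have : dMatchSeq a b < ENNReal.ofReal ε := by
      rw [hzero]; exact ENNReal.ofReal_pos.mpr hε
    rw [dMatchSeq, iInf_lt_iff] at this
    obtain ⟨⟨σ, hσ⟩, hlt⟩ := this
    exact ⟨σ, hσ, fun i => lt_of_le_of_lt (le_iSup (fun i => eDist (a i) (b (σ i))) i) hlt⟩
  have hsmall' : ∀ ε : ℝ, 0 < ε → ∃ σ' : ℕ → ℕ, Function.Bijective σ' ∧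
      ∀ j, eDist (b j) (a (σ' j)) < ENNReal.ofReal ε := by
    intro ε hε
    obtain ⟨σ, hσ, hlt⟩ := hsmall ε hε
    set e := Equiv.ofBijective σ hσ with he
    refine ⟨fun j => e.symm j, e.symm.bijective, fun j => ?_⟩
    rw [eDist_comm]
    have : σ (e.symm j) = j := e.apply_symm_apply j
    calc eDist (a (e.symm j)) (b j) = eDist (a (e.symm j)) (b (σ (e.symm j))) := by rw [this]
      _ < ENNReal.ofReal ε := hlt _
  obtain ⟨Pm, hPm⟩ := exists_min hφ
  obtain ⟨Pn, hPn⟩ := exists_min hψ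
  have ha0 := repSeq_zero hφ ha hPm
  have hb0 := repSeq_zero hψ hb hPn
  have hmm : φ Pm = ψ Pn := by
    by_contra hne
    set ε := |φ Pm - ψ Pn| with hε
    have hεpos : 0 < ε := abs_pos.mpr (sub_ne_zero.mpr hne)
    obtain ⟨σ, hσ, hlt⟩ := hsmall ε hεpos
    have hσ0 : σ 0 = 0 := by
      rcases Nat.eq_zero_or_pos (σ 0) with h | h
      · exact h
      · exfalso
        have hd := hlt 0
        obtain ⟨x', y', hxy', -⟩ := repSeq_snd_coe hb h
        rw [ha0, hxy', eDist_top_ne _ (by simp)] at hd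
        exact (lt_irrefl _ (lt_of_le_of_lt le_top hd)).elim
    have hd := hlt 0
    rw [hσ0, ha0, hb0, eDist_top_top] at hd
    rw [ENNReal.ofReal_lt_ofReal_iff_of_nonneg (abs_nonneg _)] at hd
    exact lt_irrefl _ hd
  have hb0' : b 0 = (φ Pm, ⊤) := by rw [hb0, hmm]
  apply seq_pairing ha hb ha0 hb0'
  intro x y hxy
  have h1 : {i | a i = (x, (y : EReal))}.ncard ≤ {j | b j = (x, (y : EReal))}.ncard := by
    rcases Set.eq_empty_or_nonempty {i | a i = (x, (y : EReal))} with hE | hNE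
    · rw [hE, Set.ncard_empty]; exact Nat.zero_le _
    · exact (fiber_map hψ ha hb hsmall hxy hNE).2
  have h2 : {j | b j = (x, (y : EReal))}.ncard ≤ {i | a i = (x, (y : EReal))}.ncard := by
    rcases Set.eq_empty_or_nonempty {j | b j = (x, (y : EReal))} with hE | hNE
    · rw [hE, Set.ncard_empty]; exact Nat.zero_le _
    · exact (fiber_map hφ hb ha hsmall' hxy hNE).2
  omega

end Stage8a
section Stage8b

set_option linter.unusedSectionVars false
set_option maxHeartbeats 1000000

lemma margin_helper (S : Set ℕ) (f : ℕ → ℝ) (hfin : S.Finite) (hpos : ∀ i ∈ S, 0 < f i) :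
    ∃ v : ℝ, 0 < v ∧ ∀ i ∈ S, v ≤ f i := by
  rcases Set.eq_empty_or_nonempty S with hE | hNE
  · exact ⟨1, one_pos, by rw [hE]; simp⟩
  · obtain ⟨i₀, hi₀, hmin⟩ := Set.exists_min_image S f hfin hNE
    exact ⟨f i₀, hpos i₀ hi₀, hmin⟩

variable {M N : Type*} [TopologicalSpace M] [CompactSpace M] [ConnectedSpace M]
  [LocallyConnectedSpace M] [TopologicalSpace N] [CompactSpace N] [ConnectedSpace N]
  [LocallyConnectedSpace N] {φ : M → ℝ} {ψ : N → ℝ} (hφ : Continuous φ) (hψ : Continuous ψ)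
  {a b : ℕ → ℝ × EReal}

include hφ hψ in
lemma eta_pos_matching (ha : IsRepSeq φ a) (hb : IsRepSeq ψ b)
    (hpos : 0 < dMatchSeq a b) (htop : dMatchSeq a b ≠ ⊤) :
    ∃ τ : ℕ → ℕ, Function.Bijective τ ∧ τ 0 = 0 ∧
      ∀ i, eDist (a i) (b (τ i)) ≤ dMatchSeq a b := by
  classical
  set η := dMatchSeq a b with hη
  set ηr := η.toReal with hηr
  have hηrpos : 0 < ηr := ENNReal.toReal_pos hpos.ne' htop
  have hofReal : ENNReal.ofReal ηr = η := ENNReal.ofReal_toReal htop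
  -- essential index sets
  set A' : Set ℕ := {0} ∪ {i | 2*ηr < persA a i} with hA'
  set B' : Set ℕ := {0} ∪ {j | 2*ηr < persA b j} with hB'
  have hA'fin : A'.Finite := by
    apply Set.Finite.union (Set.finite_singleton 0)
    apply Set.Finite.subset ((Set.finite_singleton 0).union
      (repSeq_pers_finite hφ ha (show (0:ℝ) < 2*ηr by linarith)))
    intro i hi
    rcases Nat.eq_zero_or_pos i with rfl | hp
    · exact Or.inl rfl
    · exact Or.inr ⟨hp, le_of_lt hi⟩
  have hB'fin : B'.Finite := by
    apply Set.Finite.union (Set.finite_singleton 0)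
    apply Set.Finite.subset ((Set.finite_singleton 0).union
      (repSeq_pers_finite hψ hb (show (0:ℝ) < 2*ηr by linarith)))
    intro i hi
    rcases Nat.eq_zero_or_pos i with rfl | hp
    · exact Or.inl rfl
    · exact Or.inr ⟨hp, le_of_lt hi⟩
  -- margin
  obtain ⟨va, hvapos, hva⟩ := margin_helper {i | 2*ηr < persA a i} (fun i => persA a i - 2*ηr)
    (hA'fin.subset Set.subset_union_right) (fun i hi => by simp only [Set.mem_setOf_eq] at hi; show (0:ℝ) < persA a i - 2*ηr; linarith)
  obtain ⟨vb, hvbpos, hvb⟩ := margin_helper {j | 2*ηr < persA b j} (fun j => persA b j - 2*ηr)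
    (hB'fin.subset Set.subset_union_right) (fun j hj => by simp only [Set.mem_setOf_eq] at hj; show (0:ℝ) < persA b j - 2*ηr; linarith)
  set ρ := min (va/2) (vb/2) with hρ
  have hρpos : 0 < ρ := lt_min (by linarith) (by linarith)
  have hρa : ∀ i, 2*ηr < persA a i → 2*ηr + 2*ρ ≤ persA a i := by
    intro i hi
    have := hva i hi
    have h1 : ρ ≤ va/2 := min_le_left _ _
    linarith
  have hρb : ∀ j, 2*ηr < persA b j → 2*ηr + 2*ρ ≤ persA b j := by
    intro j hj
    have := hvb j hj
    have h1 : ρ ≤ vb/2 := min_le_right _ _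
    linarith
  -- target sets
  set Ta : Set ℕ := {0} ∪ {i | 0 < i ∧ ρ ≤ persA a i} with hTa
  set Tb : Set ℕ := {0} ∪ {j | 0 < j ∧ ρ ≤ persA b j} with hTb
  have hTafin : Ta.Finite := (Set.finite_singleton 0).union (repSeq_pers_finite hφ ha hρpos)
  have hTbfin : Tb.Finite := (Set.finite_singleton 0).union (repSeq_pers_finite hψ hb hρpos)
  -- minimizing sequence
  have hσn : ∀ n : ℕ, ∃ σ : ℕ → ℕ, Function.Bijective σ ∧
      ∀ i, eDist (a i) (b (σ i)) < η + ENNReal.ofReal (1/(n+1)) := by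
    intro n
    have hlt : η < η + ENNReal.ofReal (1/(n+1)) := by
      apply ENNReal.lt_add_right htop
      simp only [ne_eq, ENNReal.ofReal_eq_zero, not_le]
      positivity
    rw [hη, dMatchSeq, iInf_lt_iff] at hlt
    obtain ⟨⟨σ, hσ⟩, hlt'⟩ := hlt
    exact ⟨σ, hσ, fun i => lt_of_le_of_lt
      (le_iSup (fun i => eDist (a i) (b (σ i))) i) hlt'⟩
  choose σs hσsbij hσslt using hσn
  obtain ⟨k, hk, -⟩ := ha.1
  obtain ⟨k', hk', -⟩ := hb.1
  have hbound_ne_top : ∀ n : ℕ, η + ENNReal.ofReal (1/((n:ℝ)+1)) ≠ ⊤ :=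
    fun n => ENNReal.add_ne_top.mpr ⟨htop, ENNReal.ofReal_ne_top⟩
  have hσs0 : ∀ n, σs n 0 = 0 := by
    intro n
    rcases Nat.eq_zero_or_pos (σs n 0) with h | h
    · exact h
    · exfalso
      obtain ⟨x', y', hxy', -⟩ := repSeq_snd_coe hb h
      have hd := hσslt n 0
      rw [hk, hxy', eDist_top_ne _ (by simp)] at hd
      exact hbound_ne_top n (top_le_iff.mp hd.le)
  -- choose N₀
  obtain ⟨N₀, hN₀⟩ := exists_nat_gt (2/ρ)
  have hN₀small : ∀ n : ℕ, N₀ ≤ n → 1/((n:ℝ)+1) ≤ ρ/2 := by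
    intro n hn
    have h2ρ : 0 < 2/ρ := by positivity
    have hnn : (2:ℝ)/ρ < (n:ℝ)+1 := by
      calc (2:ℝ)/ρ < N₀ := hN₀
        _ ≤ n := by exact_mod_cast hn
        _ < n+1 := by linarith
    rw [div_le_div_iff₀ (by positivity) (by positivity)]
    rw [div_lt_iff₀ hρpos] at hnn
    linarith
  have hbound_eq : ∀ n : ℕ, η + ENNReal.ofReal (1/((n:ℝ)+1))
      = ENNReal.ofReal (ηr + 1/((n:ℝ)+1)) := by
    intro n
    rw [ENNReal.ofReal_add (by linarith) (by positivity), hofReal]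
  -- key1 : essential a-indices go to Tb
  have key1 : ∀ n, N₀ ≤ n → ∀ i ∈ A', σs n i ∈ Tb := by
    intro n hn i hi
    rcases Nat.eq_zero_or_pos i with rfl | hipos
    · rw [hσs0 n]; exact Or.inl rfl
    · have hiA : 2*ηr < persA a i := by
        rcases hi with h0 | h
        · exact absurd h0 (by simp [Nat.pos_iff_ne_zero.mp hipos])
        · exact h
      obtain ⟨x, y, hxy, hle, hpa, -⟩ := repSeq_snd_coe ha hipos
      have hd := hσslt n i
      have hσipos : 0 < σs n i := by
        rcases Nat.eq_zero_or_pos (σs n i) with h | h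
        · exfalso
          rw [h, hxy, hk', eDist_ne_top (p := (x, (y : EReal))) k' (by simp)] at hd
          exact hbound_ne_top n (top_le_iff.mp hd.le)
        · exact h
      obtain ⟨x', y', hxy', hle', hpb, -⟩ := repSeq_snd_coe hb hσipos
      rw [hxy, hxy', hbound_eq n] at hd
      have ht2 : ηr + 1/((n:ℝ)+1) ≤ (y - x)/2 := by
        have := hρa i hiA
        rw [hpa] at this
        have := hN₀small n hn
        linarith
      have hmax := eDist_lt_analysis hle ht2 hd
      have habs1 := abs_lt.mp (lt_of_le_of_lt (le_max_left _ _) hmax)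
      have habs2 := abs_lt.mp (lt_of_le_of_lt (le_max_right _ _) hmax)
      refine Or.inr ⟨hσipos, ?_⟩
      rw [hpb]
      have := hρa i hiA
      rw [hpa] at this
      have := hN₀small n hn
      linarith
  -- key2 : essential b-indices are hit from Ta
  have key2 : ∀ n, N₀ ≤ n → ∀ j ∈ B', (Equiv.ofBijective (σs n) (hσsbij n)).symm j ∈ Ta := by
    intro n hn j hj
    set en := Equiv.ofBijective (σs n) (hσsbij n) with hen
    rcases Nat.eq_zero_or_pos j with rfl | hjpos
    · have : en.symm 0 = 0 := by
        rw [Equiv.symm_apply_eq]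
        exact (hσs0 n).symm
      rw [this]; exact Or.inl rfl
    · have hjB : 2*ηr < persA b j := by
        rcases hj with h0 | h
        · exact absurd h0 (by simp [Nat.pos_iff_ne_zero.mp hjpos])
        · exact h
      set i := en.symm j with hidef
      have hσi : σs n i = j := en.apply_symm_apply j
      have hd : eDist (a i) (b j) < η + ENNReal.ofReal (1/((n:ℝ)+1)) := by
        have := hσslt n i
        rwa [hσi] at this
      have hipos : 0 < i := by
        rcases Nat.eq_zero_or_pos i with h | h
        · exfalso
          obtain ⟨x', y', hxy', -⟩ := repSeq_snd_coe hb hjpos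
          rw [h, hk, hxy', eDist_top_ne _ (by simp)] at hd
          exact hbound_ne_top n (top_le_iff.mp hd.le)
        · exact h
      obtain ⟨x, y, hxy, hle, hpa, -⟩ := repSeq_snd_coe ha hipos
      obtain ⟨x', y', hxy', hle', hpb, -⟩ := repSeq_snd_coe hb hjpos
      rw [hxy, hxy', hbound_eq n, eDist_comm] at hd
      have ht2 : ηr + 1/((n:ℝ)+1) ≤ (y' - x')/2 := by
        have := hρb j hjB
        rw [hpb] at this
        have := hN₀small n hn
        linarith
      have hmax := eDist_lt_analysis hle' ht2 hd
      have habs1 := abs_lt.mp (lt_of_le_of_lt (le_max_left _ _) hmax)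
      have habs2 := abs_lt.mp (lt_of_le_of_lt (le_max_right _ _) hmax)
      refine Or.inr ⟨hipos, ?_⟩
      rw [hpa]
      have := hρb j hjB
      rw [hpb] at this
      have := hN₀small n hn
      linarith
  -- pigeonhole over n
  set AF := hA'fin.toFinset with hAF
  set BF := hB'fin.toFinset with hBF
  set TaF := hTafin.toFinset with hTaF
  set TbF := hTbfin.toFinset with hTbF
  set F' : ℕ → Option ((↥AF → ↥TbF) × (↥BF → ↥TaF)) := fun n =>
    if h : N₀ ≤ n then some
      (fun i => ⟨σs n i, hTbfin.mem_toFinset.mpr (key1 n h i (hA'fin.mem_toFinset.mp i.2))⟩,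
       fun j => ⟨(Equiv.ofBijective (σs n) (hσsbij n)).symm j,
         hTafin.mem_toFinset.mpr (key2 n h j (hB'fin.mem_toFinset.mp j.2))⟩)
    else none with hF'
  obtain ⟨c, hc⟩ := Finite.exists_infinite_fiber F'
  have hSn : (F' ⁻¹' {c}).Infinite := Set.infinite_coe_iff.mp hc
  have hcne : c ≠ none := by
    rintro rfl
    apply Set.not_infinite.mpr (Set.finite_Iio N₀) (hSn.mono ?_)
    intro n hn
    simp only [Set.mem_preimage, Set.mem_singleton_iff, hF'] at hn
    by_contra hlt
    simp only [Set.mem_Iio, not_lt] at hlt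
    rw [dif_pos hlt] at hn
    exact Option.some_ne_none _ hn
  obtain ⟨fg, rfl⟩ := Option.ne_none_iff_exists'.mp hcne
  have hmemSn : ∀ n ∈ F' ⁻¹' {some fg}, N₀ ≤ n ∧
      (∀ i (hi : i ∈ A'), σs n i = (fg.1 ⟨i, hA'fin.mem_toFinset.mpr hi⟩ : ℕ)) ∧
      (∀ j (hj : j ∈ B'), ((Equiv.ofBijective (σs n) (hσsbij n)).symm j : ℕ)
        = (fg.2 ⟨j, hB'fin.mem_toFinset.mpr hj⟩ : ℕ)) := by
    intro n hn
    simp only [Set.mem_preimage, Set.mem_singleton_iff, hF'] at hn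
    by_cases h : N₀ ≤ n
    · rw [dif_pos h] at hn
      have hn' := Option.some_injective _ hn
      refine ⟨h, ?_, ?_⟩
      · intro i hi
        have := congrFun (congrArg Prod.fst hn') ⟨i, hA'fin.mem_toFinset.mpr hi⟩
        exact congrArg Subtype.val this
      · intro j hj
        have := congrFun (congrArg Prod.snd hn') ⟨j, hB'fin.mem_toFinset.mpr hj⟩
        exact congrArg Subtype.val this
    · rw [dif_neg h] at hn
      exact absurd hn (Option.some_ne_none _).symm  -- none = some
  obtain ⟨N, hN⟩ := hSn.nonempty
  obtain ⟨hNge, hNa, hNb⟩ := hmemSn N hN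
  set σN := σs N with hσN
  set eN := Equiv.ofBijective (σs N) (hσsbij N) with heN
  have hgt : ∀ k : ℕ, ∃ n ∈ F' ⁻¹' {some fg}, k < n := by
    intro k
    obtain ⟨n, hn, hnot⟩ := hSn.exists_notMem_finset (Finset.range (k+1))
    refine ⟨n, hn, ?_⟩
    by_contra h
    exact hnot (Finset.mem_range.mpr (by omega))
  -- cost bounds
  have cost1 : ∀ i ∈ A', eDist (a i) (b (σN i)) ≤ η := by
    intro i hi
    apply ENNReal.le_of_forall_pos_le_add
    intro ε hε hηlt
    obtain ⟨n, hn, hnk⟩ := hgt (max N₀ ⌈(1:ℝ)/ε⌉₊)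
    obtain ⟨hnge, hna, hnb⟩ := hmemSn n hn
    have heqσ : σs n i = σN i := by
      rw [hna i hi, hNa i hi]
    have hd := hσslt n i
    rw [heqσ] at hd
    have hsmall : ENNReal.ofReal (1/((n:ℝ)+1)) ≤ (ε : ℝ≥0∞) := by
      rw [← ENNReal.ofReal_coe_nnreal]
      apply ENNReal.ofReal_le_ofReal
      have hceil : (1:ℝ)/ε ≤ ⌈(1:ℝ)/ε⌉₊ := Nat.le_ceil _
      have hn1 : (⌈(1:ℝ)/ε⌉₊ : ℝ) ≤ n := by
        have : ⌈(1:ℝ)/ε⌉₊ ≤ n := le_of_lt (lt_of_le_of_lt (le_max_right _ _) hnk)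
        exact_mod_cast this
      rw [div_le_iff₀ (by positivity)]
      have hεpos : (0:ℝ) < ε := hε
      calc (1:ℝ) = (1/ε) * ε := by field_simp
        _ ≤ (n+1) * ε := by
            apply mul_le_mul_of_nonneg_right _ hεpos.le
            linarith
        _ = (ε:ℝ) * (n+1) := by ring
    calc eDist (a i) (b (σN i)) ≤ η + ENNReal.ofReal (1/((n:ℝ)+1)) := hd.le
      _ ≤ η + ε := add_le_add le_rfl hsmall
  have cost2 : ∀ j ∈ B', eDist (a (eN.symm j)) (b j) ≤ η := by
    intro j hj
    apply ENNReal.le_of_forall_pos_le_add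
    intro ε hε hηlt
    obtain ⟨n, hn, hnk⟩ := hgt (max N₀ ⌈(1:ℝ)/ε⌉₊)
    obtain ⟨hnge, hna, hnb⟩ := hmemSn n hn
    set en := Equiv.ofBijective (σs n) (hσsbij n) with hen
    have heqi : (en.symm j : ℕ) = (eN.symm j : ℕ) := by
      rw [hnb j hj, hNb j hj]
    have hd : eDist (a (en.symm j)) (b j) < η + ENNReal.ofReal (1/((n:ℝ)+1)) := by
      have := hσslt n (en.symm j)
      rwa [show σs n (en.symm j) = j from en.apply_symm_apply j] at this
    rw [heqi] at hd
    have hsmall : ENNReal.ofReal (1/((n:ℝ)+1)) ≤ (ε : ℝ≥0∞) := by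
      rw [← ENNReal.ofReal_coe_nnreal]
      apply ENNReal.ofReal_le_ofReal
      have hceil : (1:ℝ)/ε ≤ ⌈(1:ℝ)/ε⌉₊ := Nat.le_ceil _
      have hn1 : (⌈(1:ℝ)/ε⌉₊ : ℝ) ≤ n := by
        have : ⌈(1:ℝ)/ε⌉₊ ≤ n := le_of_lt (lt_of_le_of_lt (le_max_right _ _) hnk)
        exact_mod_cast this
      rw [div_le_iff₀ (by positivity)]
      have hεpos : (0:ℝ) < ε := hε
      calc (1:ℝ) = (1/ε) * ε := by field_simp
        _ ≤ (n+1) * ε := by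
            apply mul_le_mul_of_nonneg_right _ hεpos.le
            linarith
        _ = (ε:ℝ) * (n+1) := by ring
    calc eDist (a (eN.symm j)) (b j) ≤ η + ENNReal.ofReal (1/((n:ℝ)+1)) := hd.le
      _ ≤ η + ε := add_le_add le_rfl hsmall
  -- build the final bijection
  set D : Set ℕ := A' ∪ ((fun j => (eN.symm j : ℕ)) '' B') with hD
  have hDfin : D.Finite := hA'fin.union (hB'fin.image _)
  set R : Set ℕ := σN '' D with hR
  have hRfin : R.Finite := hDfin.image _
  have hBR : B' ⊆ R := by
    intro j hj
    refine ⟨(eN.symm j : ℕ), Or.inr ⟨j, hj, rfl⟩, ?_⟩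
    exact eN.apply_symm_apply j
  set e : ↥D ≃ ↥R := Equiv.Set.image σN D (hσsbij N).1 with he
  obtain ⟨τ, hτbij, hτon, hτoff⟩ := extend_partial hDfin hRfin e
  have hτD : ∀ i (h : i ∈ D), τ i = σN i := by
    intro i h
    rw [hτon i h]
    rfl
  have h0D : (0:ℕ) ∈ D := Or.inl (Or.inl rfl)
  have hτ0 : τ 0 = 0 := by
    rw [hτD 0 h0D]
    exact hσs0 N
  refine ⟨τ, hτbij, hτ0, ?_⟩
  intro i
  by_cases hiD : i ∈ D
  · rw [hτD i hiD]
    rcases hiD with hiA | ⟨j, hj, rfl⟩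
    · exact cost1 i hiA
    · have : σN ((eN.symm j : ℕ)) = j := eN.apply_symm_apply j
      rw [this]
      exact cost2 j hj
  · have hiA : i ∉ A' := fun h => hiD (Or.inl h)
    have hipos : 0 < i := by
      rcases Nat.eq_zero_or_pos i with rfl | h
      · exact absurd h0D hiD
      · exact h
    have hpa_le : persA a i ≤ 2*ηr := by
      by_contra h
      exact hiA (Or.inr (by push_neg at h; exact h))
    have hτiR : τ i ∉ R := hτoff i hiD
    have hτiB : τ i ∉ B' := fun h => hτiR (hBR h)
    have hτipos : 0 < τ i := by
      rcases Nat.eq_zero_or_pos (τ i) with h | h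
      · exact absurd (show τ i ∈ R by rw [h]; exact hBR (Or.inl rfl)) hτiR
      · exact h
    have hpb_le : persA b (τ i) ≤ 2*ηr := by
      by_contra h
      exact hτiB (Or.inr (by push_neg at h; exact h))
    obtain ⟨x, y, hxy, hle, hpa, -⟩ := repSeq_snd_coe ha hipos
    obtain ⟨x', y', hxy', hle', hpb, -⟩ := repSeq_snd_coe hb hτipos
    rw [hxy, hxy']
    calc eDist (x, (y : EReal)) (x', (y' : EReal))
        ≤ ENNReal.ofReal (max ((y - x)/2) ((y' - x')/2)) := eDist_coe_le_pers x y x' y'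
      _ ≤ ENNReal.ofReal ηr := by
          apply ENNReal.ofReal_le_ofReal
          rw [hpa] at hpa_le
          rw [hpb] at hpb_le
          rcases max_cases ((y - x)/2) ((y' - x')/2) with ⟨h, -⟩ | ⟨h, -⟩ <;> rw [h] <;> linarith
      _ = η := hofReal
end Stage8b
theorem optimal_matching
    {M N : Type*} [TopologicalSpace M] [CompactSpace M] [ConnectedSpace M] [LocallyConnectedSpace M] [T2Space M] [TopologicalSpace N] [CompactSpace N] [ConnectedSpace N] [LocallyConnectedSpace N] [T2Space N]
    {φ : M → ℝ} {ψ : N → ℝ} (hφ : Continuous φ) (hψ : Continuous ψ)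
    (a b : ℕ → ℝ × EReal) (ha : IsRepSeq φ a) (hb : IsRepSeq ψ b) :
    (∃ σ : ℕ → ℕ, Function.Bijective σ ∧
      (⨆ i : ℕ, eDist (a i) (b (σ i))) = dMatch φ ψ ∧
      ∃ i₀ : ℕ, eDist (a i₀) (b (σ i₀)) = ⨆ i : ℕ, eDist (a i) (b (σ i))) ∧
    ∀ σ : ℕ → ℕ, Function.Bijective σ → σ 0 = 0 →
      ∃ i₀ : ℕ, eDist (a i₀) (b (σ i₀)) = ⨆ i : ℕ, eDist (a i) (b (σ i)) := by
  have hη := dMatch_eq_dMatchSeq hφ hψ ha hb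
  have htop := dMatchSeq_ne_top hφ hψ ha hb
  constructor
  · have hmain : ∃ τ : ℕ → ℕ, Function.Bijective τ ∧ τ 0 = 0 ∧
        ∀ i, eDist (a i) (b (τ i)) ≤ dMatchSeq a b := by
      rcases eq_or_ne (dMatchSeq a b) 0 with hz | hnz
      · obtain ⟨τ, hbij, h0, hrel⟩ := eta_zero_pairing hφ hψ ha hb hz
        refine ⟨τ, hbij, h0, ?_⟩
        intro i
        rw [hz]
        apply le_of_eq
        rcases hrel i with h | ⟨h1, h2⟩
        · rcases Nat.eq_zero_or_pos i with rfl | hipos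
          · obtain ⟨k, hk, -⟩ := ha.1
            rw [h, hk, eDist_top_top]
            simp
          · obtain ⟨x, y, hxy, hle, -, -⟩ := repSeq_snd_coe ha hipos
            rw [h, hxy, eDist_coe_coe]
            rw [ENNReal.ofReal_eq_zero]
            apply le_trans (min_le_left _ _)
            simp
        · exact eDist_diag_diag h1 h2
      · obtain ⟨τ, hbij, h0, hle⟩ :=
          eta_pos_matching hφ hψ ha hb (pos_iff_ne_zero.mpr hnz) htop
        exact ⟨τ, hbij, h0, hle⟩
    obtain ⟨τ, hbij, h0, hle⟩ := hmain
    have hsup_le : (⨆ i, eDist (a i) (b (τ i))) ≤ dMatchSeq a b := iSup_le hle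
    have hsup_ge : dMatchSeq a b ≤ ⨆ i, eDist (a i) (b (τ i)) :=
      iInf_le (fun σ : {σ : ℕ → ℕ // Function.Bijective σ} =>
        ⨆ i : ℕ, eDist (a i) (b (σ.1 i))) ⟨τ, hbij⟩
    have hsup : (⨆ i, eDist (a i) (b (τ i))) = dMatch φ ψ := by
      rw [hη]; exact le_antisymm hsup_le hsup_ge
    obtain ⟨i₀, hi₀, -⟩ := sup_attained hφ hψ ha hb τ hbij h0
    exact ⟨τ, hbij, hsup, ⟨i₀, hi₀.symm⟩⟩
  · intro σ hbij h0
    obtain ⟨i₀, hi₀, -⟩ := sup_attained hφ hψ ha hb σ hbij h0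
    exact ⟨i₀, hi₀.symm⟩
end

section
/- Cantor–Bernstein with matching control: Let ε ≥ 0 and let (a_i)_{i∈ℕ}, (b_i)_{i∈ℕ} be sequences in a pseudo-metric space (X, d). If there exist injections f, g : ℕ → ℕ such that d(a_i, b_{f(i)}) ≤ ε and d(b_i, a_{g(i)}) ≤ ε for all i, then there exists a bijection l : ℕ → ℕ such that d(a_i, b_{l(i)}) ≤ ε for all i. -/
open Set Topology
open scoped ENNReal

theorem refined_cb_aux {A B : Type*} (f : A → B) (g : B → A)
    (hf : Function.Injective f) (hg : Function.Injective g) :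
    ∃ l : A → B, Function.Bijective l ∧ ∀ i, f i = l i ∨ g (l i) = i := by
  classical
  let S : Set A := ⋃ n, (g ∘ f)^[n] '' (Set.range g)ᶜ
  have hstep : ∀ i ∈ S, g (f i) ∈ S := by
    intro i hi
    obtain ⟨n, hn⟩ := Set.mem_iUnion.1 hi
    obtain ⟨x, hx, rfl⟩ := hn
    exact Set.mem_iUnion.2 ⟨n + 1, x, hx, by
      rw [Function.iterate_succ_apply']; rfl⟩
  have hout : ∀ i, i ∉ S → ∃ j, g j = i := by
    intro i hi
    by_contra h
    push_neg at h
    exact hi (Set.mem_iUnion.2 ⟨0, i, by simp only [Set.mem_compl_iff, Set.mem_range]; push_neg; exact fun j => h j, rfl⟩)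
  let l : A → B := fun i => if h : i ∈ S then f i else (hout i h).choose
  have hl_out : ∀ i (h : i ∉ S), g (l i) = i := by
    intro i h
    simp only [l, dif_neg h]
    exact (hout i h).choose_spec
  have hl_in : ∀ i (h : i ∈ S), l i = f i := fun i h => dif_pos h
  refine ⟨l, ⟨?_, ?_⟩, ?_⟩
  · intro i i' he
    by_cases hi : i ∈ S <;> by_cases hi' : i' ∈ S
    · exact hf (by rwa [hl_in i hi, hl_in i' hi'] at he)
    · exfalso
      rw [hl_in i hi] at he
      have : g (f i) = i' := by rw [he]; exact hl_out i' hi'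
      exact hi' (this ▸ hstep i hi)
    · exfalso
      rw [hl_in i' hi'] at he
      have : g (f i') = i := by rw [← he]; exact hl_out i hi
      exact hi (this ▸ hstep i' hi')
    · rw [← hl_out i hi, ← hl_out i' hi', he]
  · intro j
    by_cases hj : g j ∈ S
    · obtain ⟨n, hn⟩ := Set.mem_iUnion.1 hj
      obtain ⟨x, hx, hxe⟩ := hn
      cases n with
      | zero => exact absurd ⟨j, hxe.symm⟩ hx
      | succ m =>
        rw [Function.iterate_succ_apply'] at hxe
        have hji : j = f ((g ∘ f)^[m] x) := hg hxe.symm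
        have hmem : (g ∘ f)^[m] x ∈ S := Set.mem_iUnion.2 ⟨m, x, hx, rfl⟩
        exact ⟨(g ∘ f)^[m] x, by rw [hl_in _ hmem, ← hji]⟩
    · refine ⟨g j, ?_⟩
      have := hl_out (g j) hj
      exact hg this
  · intro i
    by_cases hi : i ∈ S
    · exact Or.inl (hl_in i hi).symm
    · exact Or.inr (hl_out i hi)


theorem cantor_bernstein_matching
    {X : Type*} [PseudoMetricSpace X] (ε : ℝ) (hε : 0 ≤ ε)
    (a b : ℕ → X) (f g : ℕ → ℕ)
    (hf : Function.Injective f) (hg : Function.Injective g)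
    (hfd : ∀ i, dist (a i) (b (f i)) ≤ ε) (hgd : ∀ i, dist (b i) (a (g i)) ≤ ε) :
    ∃ l : ℕ → ℕ, Function.Bijective l ∧ ∀ i, dist (a i) (b (l i)) ≤ ε := by
  obtain ⟨l, hbij, hl⟩ := refined_cb_aux f g hf hg
  refine ⟨l, hbij, fun i => ?_⟩
  rcases hl i with h | h
  · rw [← h]; exact hfd i
  · calc dist (a i) (b (l i)) = dist (b (l i)) (a (g (l i))) := by rw [h, dist_comm]
      _ ≤ ε := hgd (l i)
end
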